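/- arXiv:1412.4419 — 8 statements merged into one kernel-verified Lean document; each statement's English description precedes it below -/
import Mathlib

section
/- Let G, U : ℕ → M₂(ℂ) satisfy G_0 = U_0 = I and ∑_{j=0}^{n} G_j·U_{n−j} = 0 for all n ≥ 1, and define the matrix-valued affine coordinates Z_{k,l} := −∑_{j=0}^{k} G_j·U_{k+l+1−j} for k, l ≥ 0. Then for all k, l ≥ 0 the recursion Z_{k+1,l} − Z_{k,l+1} = −G_{k+1}·U_{l+1} = Z_{k,0}·Z_{0,l} holds. -/
/-- Recursion relation `Z_{k+1,l} - Z_{k,l+1} = -G_{k+1}·U_{l+1} = Z_{k,0}·Z_{0,l}`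
for the matrix-valued affine coordinates. -/
theorem matrix_affine_coordinates_recursion
    (G U : ℕ → Matrix (Fin 2) (Fin 2) ℂ)
    (hG0 : G 0 = 1) (hU0 : U 0 = 1)
    (hinv : ∀ n : ℕ, 1 ≤ n → ∑ j ∈ Finset.range (n + 1), G j * U (n - j) = 0)
    (Z : ℕ → ℕ → Matrix (Fin 2) (Fin 2) ℂ)
    (hZ : ∀ k l : ℕ, Z k l = -∑ j ∈ Finset.range (k + 1), G j * U (k + l + 1 - j)) :
    ∀ k l : ℕ,
      Z (k + 1) l - Z k (l + 1) = -(G (k + 1) * U (l + 1)) ∧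
      Z (k + 1) l - Z k (l + 1) = Z k 0 * Z 0 l := by
  intro k l
  have h1 : Z (k + 1) l - Z k (l + 1) = -(G (k + 1) * U (l + 1)) := by
    rw [hZ, hZ, Finset.sum_range_succ,
      show k + 1 + l = k + (l + 1) from by omega,
      show k + (l + 1) + 1 - (k + 1) = l + 1 from by omega]
    abel
  refine ⟨h1, ?_⟩
  have hZk0 : Z k 0 = G (k + 1) := by
    have h := hinv (k + 1) (by omega)
    rw [Finset.sum_range_succ, Nat.sub_self, hU0, mul_one] at h
    rw [hZ]
    have hk : ∀ j, k + 0 + 1 - j = k + 1 - j := by intro j; omega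
    simp only [hk]
    have : ∑ j ∈ Finset.range (k + 1), G j * U (k + 1 - j) = -G (k + 1) := by
      linear_combination (norm := abel) h
    rw [this, neg_neg]
  have hZ0l : Z 0 l = -(U (l + 1)) := by
    rw [hZ]
    simp [hG0]
  rw [h1, hZk0, hZ0l, mul_neg]
end

section
/- Let G, U : ℕ → M₂(ℂ) satisfy G_0 = U_0 = I and ∑_{j=0}^{n} G_j·U_{n−j} = 0 for all n ≥ 1, and define Z_{k,l} := −∑_{j=0}^{k} G_j·U_{k+l+1−j}. Suppose W : ℕ × ℕ → M₂(ℂ) satisfies the recursion W_{k+1,l} − W_{k,l+1} = W_{k,0}·W_{0,l} for all k, l ≥ 0 together with the boundary data W_{k,0} = G_{k+1} and W_{0,l} = −U_{l+1} for all k, l ≥ 0. Then W_{k,l} = Z_{k,l} for all k, l ≥ 0. -/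
/-- Uniqueness: the matrix-valued affine coordinates are uniquely specified by
the recursion relation together with the boundary data. -/
theorem matrix_affine_coordinates_unique
    (G U : ℕ → Matrix (Fin 2) (Fin 2) ℂ)
    (hG0 : G 0 = 1) (hU0 : U 0 = 1)
    (hinv : ∀ n : ℕ, 1 ≤ n → ∑ j ∈ Finset.range (n + 1), G j * U (n - j) = 0)
    (Z : ℕ → ℕ → Matrix (Fin 2) (Fin 2) ℂ)
    (hZ : ∀ k l : ℕ, Z k l = -∑ j ∈ Finset.range (k + 1), G j * U (k + l + 1 - j))
    (W : ℕ → ℕ → Matrix (Fin 2) (Fin 2) ℂ)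
    (hWrec : ∀ k l : ℕ, W (k + 1) l - W k (l + 1) = W k 0 * W 0 l)
    (hWG : ∀ k : ℕ, W k 0 = G (k + 1))
    (hWU : ∀ l : ℕ, W 0 l = -U (l + 1)) :
    ∀ k l : ℕ, W k l = Z k l := by
  intro k
  induction k with
  | zero =>
    intro l
    rw [hZ]
    simp [hG0, hWU l]
  | succ k ih =>
    intro l
    have h1 : W (k + 1) l = W k (l + 1) + W k 0 * W 0 l :=
      (sub_eq_iff_eq_add'.mp (hWrec k l))
    have hsum : ∑ j ∈ Finset.range (k + 1), G j * U (k + 1 + l + 1 - j)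
        = ∑ j ∈ Finset.range (k + 1), G j * U (k + (l + 1) + 1 - j) := by
      refine Finset.sum_congr rfl fun j _ => by rw [show k + 1 + l + 1 - j = k + (l + 1) + 1 - j from by omega]
    have hidx : k + 1 + l + 1 - (k + 1) = l + 1 := by omega
    have hZ' : Z (k + 1) l = Z k (l + 1) - G (k + 1) * U (l + 1) := by
      rw [hZ (k + 1) l, hZ k (l + 1), Finset.sum_range_succ, hsum, hidx]
      abel
    rw [h1, ih, hWG, hWU, hZ']
    simp [mul_neg, sub_eq_add_neg]
end

section
/- Let G, U : ℕ → M₂(ℂ) satisfy G_0 = U_0 = I and ∑_{j=0}^{n} G_j·U_{n−j} = 0 for all n ≥ 1, and define Z_{k,l} := −∑_{j=0}^{k} G_j·U_{k+l+1−j}. Then in the ring of 2×2 matrices over ℂ[[x,y]] the generating identity holds: (y − x)·∑_{k,l≥0} Z_{k,l}·x^k·y^l = I − (∑_{k≥0} G_k·x^k)·(∑_{l≥0} U_l·y^l). -/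
open MvPowerSeries Finsupp in
lemma coeff_prod_aux (f g : MvPowerSeries (Fin 2) ℂ) (A B : ℕ → ℂ)
    (hf : ∀ d : Fin 2 →₀ ℕ, MvPowerSeries.coeff d f = if d 1 = 0 then A (d 0) else 0)
    (hg : ∀ d : Fin 2 →₀ ℕ, MvPowerSeries.coeff d g = if d 0 = 0 then B (d 1) else 0)
    (d : Fin 2 →₀ ℕ) :
    MvPowerSeries.coeff d (f * g) = A (d 0) * B (d 1) := by
  classical
  rw [MvPowerSeries.coeff_mul]
  have hmem : (Finsupp.single (0 : Fin 2) (d 0), Finsupp.single (1 : Fin 2) (d 1)) ∈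
      Finset.HasAntidiagonal.antidiagonal d := by
    rw [Finset.HasAntidiagonal.mem_antidiagonal]
    ext s
    fin_cases s <;> simp
  rw [Finset.sum_eq_single_of_mem _ hmem]
  · simp [hf, hg]
  · rintro ⟨p, q⟩ hpq hne
    rw [Finset.HasAntidiagonal.mem_antidiagonal] at hpq
    have h0 : p 0 + q 0 = d 0 := by
      have := congrArg (fun f : Fin 2 →₀ ℕ => f 0) hpq; simpa using this
    have h1 : p 1 + q 1 = d 1 := by
      have := congrArg (fun f : Fin 2 →₀ ℕ => f 1) hpq; simpa using this
    simp only [hf, hg]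
    by_cases hp1 : p 1 = 0
    · by_cases hq0 : q 0 = 0
      · exfalso
        apply hne
        have hp : p = Finsupp.single (0 : Fin 2) (d 0) := by
          ext s; fin_cases s
          · simpa using by omega
          · simpa using hp1
        have hq : q = Finsupp.single (1 : Fin 2) (d 1) := by
          ext s; fin_cases s
          · simpa using hq0
          · simpa using by omega
        simp [hp, hq]
      · simp [hq0]
    · simp [hp1]

/-- Generating identity `(y-x)·∑ Z_{k,l} x^k y^l = I - G(x)·U(y)` for the
matrix-valued affine coordinates, in the ring of `2×2` matrices over `ℂ[[x,y]]`
(the variable `x` is `MvPowerSeries.X 0` and `y` is `MvPowerSeries.X 1`). -/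
theorem matrix_affine_coordinates_generating_identity
    (G U : ℕ → Matrix (Fin 2) (Fin 2) ℂ)
    (hG0 : G 0 = 1) (hU0 : U 0 = 1)
    (hinv : ∀ n : ℕ, 1 ≤ n → ∑ j ∈ Finset.range (n + 1), G j * U (n - j) = 0)
    (Z : ℕ → ℕ → Matrix (Fin 2) (Fin 2) ℂ)
    (hZ : ∀ k l : ℕ, Z k l = -∑ j ∈ Finset.range (k + 1), G j * U (k + l + 1 - j))
    (S Gser User : Matrix (Fin 2) (Fin 2) (MvPowerSeries (Fin 2) ℂ))
    (hS : ∀ (d : Fin 2 →₀ ℕ) (i j : Fin 2),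
      MvPowerSeries.coeff d (S i j) = Z (d 0) (d 1) i j)
    (hGser : ∀ (d : Fin 2 →₀ ℕ) (i j : Fin 2),
      MvPowerSeries.coeff d (Gser i j) = if d 1 = 0 then G (d 0) i j else 0)
    (hUser : ∀ (d : Fin 2 →₀ ℕ) (i j : Fin 2),
      MvPowerSeries.coeff d (User i j) = if d 0 = 0 then U (d 1) i j else 0) :
    (MvPowerSeries.X 1 - MvPowerSeries.X 0 : MvPowerSeries (Fin 2) ℂ) • S =
      1 - Gser * User := by
  classical
  have key : ∀ a b : ℕ,
      (if 1 ≤ b then Z a (b - 1) else 0) - (if 1 ≤ a then Z (a - 1) b else 0)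
        = (if a = 0 ∧ b = 0 then (1 : Matrix (Fin 2) (Fin 2) ℂ) else 0) - G a * U b := by
    intro a b
    match a, b with
    | 0, 0 => simp [hG0, hU0]
    | 0, b + 1 => simp [hZ, hG0]
    | a + 1, 0 =>
      have h := hinv (a + 1) (by omega)
      rw [Finset.sum_range_succ] at h
      have hz : Z a 0 = G (a + 1) * U 0 := by
        rw [Nat.sub_self] at h
        rw [hZ]
        simp only [Nat.add_zero]
        exact neg_eq_of_add_eq_zero_right h
      simp [hz]
    | a + 1, b + 1 =>
      have e1 : ∀ j, a + 1 + b + 1 - j = a + b + 2 - j := by intro j; omega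
      have e2 : ∀ j, a + (b + 1) + 1 - j = a + b + 2 - j := by intro j; omega
      have e3 : a + b + 2 - (a + 1) = b + 1 := by omega
      simp only [Nat.add_sub_cancel, if_pos (by omega : 1 ≤ b + 1), if_pos (by omega : 1 ≤ a + 1)]
      rw [hZ, hZ]
      simp only [e1, e2]
      rw [Finset.sum_range_succ, e3]
      simp
  ext i j d
  have coeffX : ∀ (s : Fin 2) (f : MvPowerSeries (Fin 2) ℂ),
      MvPowerSeries.coeff d (MvPowerSeries.X s * f)
        = if 1 ≤ d s then MvPowerSeries.coeff (d - Finsupp.single s 1) f else 0 := by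
    intro s f
    rw [MvPowerSeries.X_def, MvPowerSeries.coeff_monomial_mul]
    simp [Finsupp.single_le_iff]
  have hsub : ∀ (s t : Fin 2) (n : ℕ), (d - Finsupp.single s n) t = d t - Finsupp.single s n t :=
    fun s t n => Finsupp.tsub_apply d _ t
  have keyij := congrFun (congrFun (key (d 0) (d 1)) i) j
  simp only [Matrix.sub_apply, Matrix.mul_apply, apply_ite (fun M : Matrix (Fin 2) (Fin 2) ℂ => M i j),
    Matrix.zero_apply] at keyij
  have hprod : MvPowerSeries.coeff d ((Gser * User) i j)
      = ∑ k, G (d 0) i k * U (d 1) k j := by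
    rw [Matrix.mul_apply, map_sum]
    exact Finset.sum_congr rfl fun k _ =>
      coeff_prod_aux (Gser i k) (User k j) (fun n => G n i k) (fun n => U n k j)
        (fun e => hGser e i k) (fun e => hUser e k j) d
  have hd0 : (d = 0) ↔ (d 0 = 0 ∧ d 1 = 0) := by
    constructor
    · intro h; subst h; simp
    · rintro ⟨h0, h1⟩; ext s; fin_cases s <;> simpa
  rw [Matrix.smul_apply, Matrix.sub_apply, smul_eq_mul, sub_mul, map_sub, coeffX, coeffX,
    map_sub, hprod]
  simp only [hS, hsub, Finsupp.single_apply, if_pos rfl, eq_self_iff_true, if_true, if_neg (by decide : ¬(1:Fin 2) = 0),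
    if_neg (by decide : ¬(0:Fin 2) = 1), Nat.sub_zero]
  rw [keyij]
  have hcoeff1 : MvPowerSeries.coeff d ((1 : Matrix (Fin 2) (Fin 2) (MvPowerSeries (Fin 2) ℂ)) i j)
      = if d 0 = 0 ∧ d 1 = 0 then (1 : Matrix (Fin 2) (Fin 2) ℂ) i j else 0 := by
    rw [Matrix.one_apply, Matrix.one_apply, apply_ite (MvPowerSeries.coeff d),
      MvPowerSeries.coeff_one, map_zero]
    by_cases h : d = 0
    · simp [h, hd0.mp h]
    · simp [h, (not_iff_not.mpr hd0).mp h]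
  rw [hcoeff1]
end

section
/- Let G, U : ℕ → M₂(ℂ) satisfy G_0 = U_0 = I and ∑_{j=0}^{n} G_j·U_{n−j} = 0 for all n ≥ 1, and define Z_{k,l} := −∑_{j=0}^{k} G_j·U_{k+l+1−j}. Assume moreover that the determinant of the matrix of power series ∑_{n} G_n·x^n (viewed as an element of M₂(ℂ[[x]])) equals the constant power series 1. Then with σ₂ := [[0, −i],[i, 0]]: (a) U_n = σ₂·(G_n)ᵀ·σ₂ for all n ≥ 0, so that Z_{k,l} = −∑_{j=0}^{k} G_j·σ₂·(G_{k+l+1−j})ᵀ·σ₂; and (b) the symmetry Z_{l,k} = −σ₂·(Z_{k,l})ᵀ·σ₂ holds for all k, l ≥ 0. -/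
open Matrix

lemma sig_sq' : (!![0, -Complex.I; Complex.I, 0] : Matrix (Fin 2) (Fin 2) ℂ) *
    !![0, -Complex.I; Complex.I, 0] = 1 := by
  ext i j; fin_cases i <;> fin_cases j <;>
    simp [Matrix.mul_apply, Fin.sum_univ_two]

lemma sig_T' : (!![0, -Complex.I; Complex.I, 0] : Matrix (Fin 2) (Fin 2) ℂ)ᵀ =
    -!![0, -Complex.I; Complex.I, 0] := by
  ext i j; fin_cases i <;> fin_cases j <;> simp

lemma sig_adj' (A : Matrix (Fin 2) (Fin 2) ℂ) :
    !![0, -Complex.I; Complex.I, 0] * Aᵀ * !![0, -Complex.I; Complex.I, 0] =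
      adjugate A := by
  ext i j; fin_cases i <;> fin_cases j <;>
    simp [adjugate_fin_two, Matrix.mul_apply, Matrix.vecMul, dotProduct,
      Fin.sum_univ_two, Matrix.transpose_apply] <;> ring_nf <;>
    simp [Complex.I_sq]

lemma sig_conj' (A B : Matrix (Fin 2) (Fin 2) ℂ) :
    !![0, -Complex.I; Complex.I, 0] *
        (A * !![0, -Complex.I; Complex.I, 0] * Bᵀ *
          !![0, -Complex.I; Complex.I, 0])ᵀ * !![0, -Complex.I; Complex.I, 0] =
      B * !![0, -Complex.I; Complex.I, 0] * Aᵀ *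
        !![0, -Complex.I; Complex.I, 0] := by
  simp only [transpose_mul, sig_T', transpose_transpose, Matrix.mul_neg,
    Matrix.neg_mul, neg_neg, ← Matrix.mul_assoc]
  rw [show (!![0, -Complex.I; Complex.I, 0] : Matrix (Fin 2) (Fin 2) ℂ) *
      !![0, -Complex.I; Complex.I, 0] * B = B by rw [sig_sq', one_mul]]

lemma sig_conj2' (A B : Matrix (Fin 2) (Fin 2) ℂ) :
    !![0, -Complex.I; Complex.I, 0] *
        (A * (!![0, -Complex.I; Complex.I, 0] * Bᵀ *
          !![0, -Complex.I; Complex.I, 0]))ᵀ * !![0, -Complex.I; Complex.I, 0] =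
      B * (!![0, -Complex.I; Complex.I, 0] * Aᵀ *
        !![0, -Complex.I; Complex.I, 0]) := by
  have h := sig_conj' A B
  simp only [Matrix.mul_assoc] at h ⊢
  exact h

/-- If `det(∑ G_n x^n) = 1` then `U_n = σ₂ G_nᵀ σ₂`, so that
`Z_{k,l} = -∑_{j=0}^k G_j σ₂ G_{k+l+1-j}ᵀ σ₂`, and the symmetry
`Z_{l,k} = -σ₂ Z_{k,l}ᵀ σ₂` holds. -/
theorem matrix_affine_coordinates_symmetry
    (G U : ℕ → Matrix (Fin 2) (Fin 2) ℂ)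
    (hG0 : G 0 = 1) (hU0 : U 0 = 1)
    (hinv : ∀ n : ℕ, 1 ≤ n → ∑ j ∈ Finset.range (n + 1), G j * U (n - j) = 0)
    (Z : ℕ → ℕ → Matrix (Fin 2) (Fin 2) ℂ)
    (hZ : ∀ k l : ℕ, Z k l = -∑ j ∈ Finset.range (k + 1), G j * U (k + l + 1 - j))
    (Gser : Matrix (Fin 2) (Fin 2) (PowerSeries ℂ))
    (hGser : ∀ (n : ℕ) (i j : Fin 2), PowerSeries.coeff (R := ℂ) n (Gser i j) = G n i j)
    (hdet : Gser.det = 1) :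
    (∀ n : ℕ, U n = !![0, -Complex.I; Complex.I, 0] * (G n)ᵀ *
        !![0, -Complex.I; Complex.I, 0]) ∧
    (∀ k l : ℕ, Z k l = -∑ j ∈ Finset.range (k + 1),
        G j * !![0, -Complex.I; Complex.I, 0] * (G (k + l + 1 - j))ᵀ *
          !![0, -Complex.I; Complex.I, 0]) ∧
    (∀ k l : ℕ, Z l k = -(!![0, -Complex.I; Complex.I, 0] * (Z k l)ᵀ *
        !![0, -Complex.I; Complex.I, 0])) := by
  -- coefficients of the adjugate series
  have hadjc : ∀ (n : ℕ) (i j : Fin 2),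
      PowerSeries.coeff (R := ℂ) n ((adjugate Gser) i j) = adjugate (G n) i j := by
    intro n i j
    rw [adjugate_fin_two Gser, adjugate_fin_two (G n)]
    fin_cases i <;> fin_cases j <;> simp [hGser, map_neg]
  have hGA : Gser * adjugate Gser = 1 := by
    rw [Matrix.mul_adjugate, hdet, one_smul]
  -- key convolution identity for the adjugates
  have hkey : ∀ n : ℕ, ∑ j ∈ Finset.range (n + 1), G j * adjugate (G (n - j)) =
      if n = 0 then 1 else 0 := by
    intro n
    ext i j
    have h : PowerSeries.coeff (R := ℂ) n ((Gser * adjugate Gser) i j) =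
        PowerSeries.coeff (R := ℂ) n ((1 : Matrix (Fin 2) (Fin 2) (PowerSeries ℂ)) i j) := by
      rw [hGA]
    rw [Matrix.mul_apply, map_sum] at h
    simp_rw [PowerSeries.coeff_mul, hGser, hadjc] at h
    rw [Finset.sum_comm] at h
    simp_rw [← Matrix.mul_apply] at h
    rw [Finset.Nat.sum_antidiagonal_eq_sum_range_succ_mk] at h
    have h2 : ∑ jj ∈ Finset.range (n + 1), (G jj * adjugate (G (n - jj))) i j =
        PowerSeries.coeff (R := ℂ) n ((1 : Matrix (Fin 2) (Fin 2) (PowerSeries ℂ)) i j) := by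
      simpa using h
    rw [Matrix.sum_apply, h2, Matrix.one_apply]
    by_cases hij : i = j <;> by_cases hn : n = 0 <;>
      simp [hij, hn, Matrix.one_apply, PowerSeries.coeff_one]
  -- recurrences
  have hU_rec : ∀ n : ℕ, 1 ≤ n →
      U n = -∑ j ∈ Finset.range n, G (j + 1) * U (n - (j + 1)) := by
    intro n hn
    have h := hinv n hn
    rw [Finset.sum_range_succ'] at h
    rw [hG0, one_mul, Nat.sub_zero] at h
    exact eq_neg_of_add_eq_zero_right h
  have hA_rec : ∀ n : ℕ, 1 ≤ n →
      adjugate (G n) = -∑ j ∈ Finset.range n, G (j + 1) * adjugate (G (n - (j + 1))) := by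
    intro n hn
    have h := hkey n
    rw [if_neg (by omega), Finset.sum_range_succ'] at h
    rw [hG0, one_mul, Nat.sub_zero] at h
    exact eq_neg_of_add_eq_zero_right h
  -- U n is the adjugate of G n
  have hUA : ∀ n : ℕ, U n = adjugate (G n) := by
    intro n
    induction n using Nat.strong_induction_on with
    | _ n ih =>
      by_cases hn : n = 0
      · subst hn; rw [hU0, hG0, adjugate_one]
      · rw [hU_rec n (by omega), hA_rec n (by omega)]
        congr 1
        refine Finset.sum_congr rfl fun j hj => ?_
        rw [ih (n - (j + 1)) (by omega)]
  have hU : ∀ n : ℕ, U n = !![0, -Complex.I; Complex.I, 0] * (G n)ᵀ *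
      !![0, -Complex.I; Complex.I, 0] := fun n => by rw [hUA n, sig_adj']
  refine ⟨hU, ?_, ?_⟩
  · intro k l
    rw [hZ]
    congr 1
    refine Finset.sum_congr rfl fun j hj => ?_
    rw [hU (k + l + 1 - j)]
    simp only [Matrix.mul_assoc]
  · intro k l
    have hsplit := hinv (k + l + 1) (by omega)
    rw [show k + l + 1 + 1 = (l + 1) + (k + 1) by ring, Finset.sum_range_add] at hsplit
    have hrefl : ∑ j ∈ Finset.range (k + 1), G (k + l + 1 - j) * U j =
        ∑ j ∈ Finset.range (k + 1), G (l + 1 + j) * U (k + l + 1 - (l + 1 + j)) := by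
      rw [← Finset.sum_range_reflect (fun j => G (l + 1 + j) * U (k + l + 1 - (l + 1 + j))) (k + 1)]
      refine Finset.sum_congr rfl fun j hj => ?_
      have hj' : j ≤ k := Nat.lt_succ_iff.mp (Finset.mem_range.mp hj)
      have e1 : l + 1 + (k + 1 - 1 - j) = k + l + 1 - j := by omega
      have e2 : k + l + 1 - (l + 1 + (k + 1 - 1 - j)) = j := by omega
      rw [e2, e1]
    have hZlk : Z l k = ∑ j ∈ Finset.range (k + 1), G (k + l + 1 - j) * U j := by
      rw [hZ]
      have hc : ∀ j ∈ Finset.range (l + 1),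
          G j * U (l + k + 1 - j) = G j * U (k + l + 1 - j) := fun j _ => by
        rw [show l + k + 1 = k + l + 1 by ring]
      rw [Finset.sum_congr rfl hc, hrefl]
      exact neg_eq_of_add_eq_zero_right hsplit
    have hZkl : -(!![0, -Complex.I; Complex.I, 0] * (Z k l)ᵀ *
        !![0, -Complex.I; Complex.I, 0]) =
        ∑ j ∈ Finset.range (k + 1), G (k + l + 1 - j) * U j := by
      rw [hZ k l]
      rw [transpose_neg, Matrix.transpose_sum, Matrix.mul_neg, Matrix.neg_mul, neg_neg,
        Finset.mul_sum, Finset.sum_mul]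
      refine Finset.sum_congr rfl fun j hj => ?_
      rw [hU (k + l + 1 - j), hU j]
      have h := sig_conj2' (G j) (G (k + l + 1 - j))
      simp only [Matrix.mul_assoc] at h ⊢
      exact h
    rw [hZlk, hZkl]
end

section
/- Let C(x) := ∑_{k≥0} c_k·x^k and Q(x) := ∑_{k≥0} q_k·x^k in ℂ[[x]], where c_k := ((−1)^k/288^k)·(6k)!/((3k)!·(2k)!) and q_k := ((1+6k)/(1−6k))·c_k. Then C(x)·Q(−x) + C(−x)·Q(x) = 2 as formal power series. (This is the Itzykson–Zuber identity c(λ)q(−λ) + c(−λ)q(λ) ≡ 2 for the series c(λ) = ∑ c_k λ^{−3k}, q(λ) = ∑ q_k λ^{−3k}, in the variable x = λ^{−3}.) -/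
/-- `c_k := ((-1)^k/288^k)·(6k)!/((3k)!(2k)!)`. -/
noncomputable def cWK (k : ℕ) : ℂ :=
  ((-1) ^ k / 288 ^ k) * ((6 * k).factorial : ℂ) /
    (((3 * k).factorial : ℂ) * ((2 * k).factorial : ℂ))

/-- `q_k := ((1+6k)/(1-6k))·c_k`. -/
noncomputable def qWK (k : ℕ) : ℂ :=
  ((1 + 6 * (k : ℂ)) / (1 - 6 * (k : ℂ))) * cWK k

open PowerSeries
open scoped PowerSeries

local notation "D" => PowerSeries.derivative ℂ

namespace IZaux

lemma cWK_zero : cWK 0 = 1 := by simp [cWK]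

lemma qWK_zero : qWK 0 = 1 := by simp [qWK, cWK]

lemma fact_ne (n : ℕ) : ((n.factorial : ℂ)) ≠ 0 :=
  Nat.cast_ne_zero.mpr (Nat.factorial_ne_zero _)

lemma cWK_mul (k : ℕ) :
    cWK k * (288 ^ k * (((3*k).factorial : ℂ) * ((2*k).factorial : ℂ)))
      = (-1)^k * ((6*k).factorial : ℂ) := by
  have n3 := fact_ne (3*k)
  have n2 := fact_ne (2*k)
  have n288 : (288:ℂ)^k ≠ 0 := pow_ne_zero _ (by norm_num)
  simp only [cWK]
  field_simp

/-- The basic recurrence `24(k+1)c_{k+1} = -(36k²+36k+5)c_k`. -/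
lemma cWK_succ (k : ℕ) :
    24 * ((k:ℂ)+1) * cWK (k+1) + (36*(k:ℂ)^2 + 36*(k:ℂ) + 5) * cWK k = 0 := by
  have h6 : ((6*(k+1)).factorial : ℂ) = ((6*k+6 : ℕ)) * ((6*k+5:ℕ)) * ((6*k+4:ℕ)) *
      ((6*k+3:ℕ)) * ((6*k+2:ℕ)) * ((6*k+1:ℕ)) * ((6*k).factorial : ℂ) := by
    norm_cast
    rw [show 6*(k+1) = (6*k+5)+1 by omega, Nat.factorial_succ,
        show (6*k+5) = (6*k+4)+1 by omega, Nat.factorial_succ,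
        show (6*k+4) = (6*k+3)+1 by omega, Nat.factorial_succ,
        show (6*k+3) = (6*k+2)+1 by omega, Nat.factorial_succ,
        show (6*k+2) = (6*k+1)+1 by omega, Nat.factorial_succ,
        Nat.factorial_succ]
    ring
  have h3 : ((3*(k+1)).factorial : ℂ) = ((3*k+3 : ℕ)) * ((3*k+2:ℕ)) * ((3*k+1:ℕ)) *
      ((3*k).factorial : ℂ) := by
    norm_cast
    rw [show 3*(k+1) = (3*k+2)+1 by omega, Nat.factorial_succ,
        show (3*k+2) = (3*k+1)+1 by omega, Nat.factorial_succ,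
        Nat.factorial_succ]
    ring
  have h2 : ((2*(k+1)).factorial : ℂ) = ((2*k+2 : ℕ)) * ((2*k+1:ℕ)) *
      ((2*k).factorial : ℂ) := by
    norm_cast
    rw [show 2*(k+1) = (2*k+1)+1 by omega, Nat.factorial_succ, Nat.factorial_succ]
    ring
  have e1 := cWK_mul (k+1)
  have e0 := cWK_mul k
  rw [h6, h3, h2, pow_succ] at e1
  have hD : (288:ℂ)^(k+1) * (((3*(k+1)).factorial : ℂ) * ((2*(k+1)).factorial : ℂ)) ≠ 0 :=
    mul_ne_zero (pow_ne_zero _ (by norm_num)) (mul_ne_zero (fact_ne _) (fact_ne _))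
  have key : (24 * ((k:ℂ)+1) * cWK (k+1) + (36*(k:ℂ)^2 + 36*(k:ℂ) + 5) * cWK k) *
      ((288:ℂ)^(k+1) * (((3*(k+1)).factorial : ℂ) * ((2*(k+1)).factorial : ℂ))) = 0 := by
    rw [h3, h2, pow_succ]
    push_cast at e1 e0 ⊢
    linear_combination (24*((k:ℂ)+1)) * e1 +
      ((36*(k:ℂ)^2 + 36*(k:ℂ) + 5) * 288 * ((3*(k:ℂ)+3)*(3*(k:ℂ)+2)*(3*(k:ℂ)+1)*
        ((2*(k:ℂ)+2)*(2*(k:ℂ)+1)))) * e0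
  exact (mul_eq_zero.mp key).resolve_right hD

/-- The local relation `2q_{k+1} = 2c_{k+1} + (6k+1)c_k`. -/
lemma qWK_succ (k : ℕ) :
    2 * qWK (k+1) = 2 * cWK (k+1) + (6*(k:ℂ)+1) * cWK k := by
  have h := cWK_succ k
  have n5 : (1 - 6*((k:ℂ)+1)) ≠ 0 := by
    have h1 : ((6*k+5 : ℕ) : ℂ) ≠ 0 := Nat.cast_ne_zero.mpr (by omega)
    push_cast at h1
    intro hx; apply h1; linear_combination -hx
  simp only [qWK]
  push_cast
  field_simp [n5]
  linear_combination (1 - 6*((k:ℂ)+1)) * h + 6*((k:ℂ)+1) * h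

lemma e2 : (2:ℂ⟦X⟧) = PowerSeries.C (2:ℂ) := (map_ofNat (PowerSeries.C (R := ℂ)) 2).symm
lemma e4 : (4:ℂ⟦X⟧) = PowerSeries.C (4:ℂ) := (map_ofNat (PowerSeries.C (R := ℂ)) 4).symm
lemma e5 : (5:ℂ⟦X⟧) = PowerSeries.C (5:ℂ) := (map_ofNat (PowerSeries.C (R := ℂ)) 5).symm
lemma e6 : (6:ℂ⟦X⟧) = PowerSeries.C (6:ℂ) := (map_ofNat (PowerSeries.C (R := ℂ)) 6).symm
lemma e24 : (24:ℂ⟦X⟧) = PowerSeries.C (24:ℂ) := (map_ofNat (PowerSeries.C (R := ℂ)) 24).symm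
lemma e36 : (36:ℂ⟦X⟧) = PowerSeries.C (36:ℂ) := (map_ofNat (PowerSeries.C (R := ℂ)) 36).symm

lemma d4 : D (4:ℂ⟦X⟧) = 0 := by rw [e4, derivative_C]
lemma d6 : D (6:ℂ⟦X⟧) = 0 := by rw [e6, derivative_C]

/-- Coefficients of the operator `θ = X·d/dX`. -/
lemma coeff_X_D (f : ℂ⟦X⟧) (n : ℕ) : coeff n (X * D f) = n * coeff n f := by
  cases n with
  | zero => simp
  | succ n =>
    rw [coeff_succ_X_mul, coeff_derivative]
    push_cast; ring

end IZaux

open IZaux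

/-- The Itzykson–Zuber identity `c(λ)q(-λ) + c(-λ)q(λ) ≡ 2`, written in the
variable `x = λ^{-3}`: `C(x)·Q(-x) + C(-x)·Q(x) = 2` as formal power series,
where `Q(-x) = rescale (-1) Q`. -/
theorem itzykson_zuber_identity (C Q : PowerSeries ℂ)
    (hC : ∀ k : ℕ, PowerSeries.coeff k C = cWK k)
    (hQ : ∀ k : ℕ, PowerSeries.coeff k Q = qWK k) :
    C * PowerSeries.rescale (-1) Q + PowerSeries.rescale (-1) C * Q = 2 := by
  set A := PowerSeries.rescale (-1) C with hAdef
  set B := PowerSeries.rescale (-1) Q with hBdef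
  have hA : ∀ k : ℕ, coeff k A = (-1)^k * cWK k := by
    intro k; rw [hAdef, coeff_rescale, hC]
  have hB : ∀ k : ℕ, coeff k B = (-1)^k * qWK k := by
    intro k; rw [hBdef, coeff_rescale, hQ]
  -- the ODE `36θ²C + 36θC + 24C' + 5C = 0` for `C`, and its analogue for `A`
  have odeC : 24 * D C + 36 * (X * D (X * D C)) + 36 * (X * D C) + 5 * C = 0 := by
    ext n
    simp only [map_add, e24, e36, e5, coeff_C_mul, coeff_X_D, coeff_derivative, map_zero, hC]
    linear_combination cWK_succ n
  have odeA : 24 * D A - 36 * (X * D (X * D A)) - 36 * (X * D A) - 5 * A = 0 := by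
    ext n
    simp only [map_add, map_sub, e24, e36, e5, coeff_C_mul, coeff_X_D, coeff_derivative,
      map_zero, hA]
    linear_combination (-((-1:ℂ)^n)) * cWK_succ n
  have expC : X * D (X * D C) = X * (X * D (D C)) + X * D C := by
    have h : D (X * D C) = X * D (D C) + D C := by
      rw [Derivation.leibniz]; simp [smul_eq_mul]
    rw [h]; ring
  have expA : X * D (X * D A) = X * (X * D (D A)) + X * D A := by
    have h : D (X * D A) = X * D (D A) + D A := by
      rw [Derivation.leibniz]; simp [smul_eq_mul]
    rw [h]; ring
  rw [expC] at odeC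
  rw [expA] at odeA
  -- the key local relations `Q = (1 + x/2)·C + 3x²·C'` and its `x ↦ -x` version
  have hK : 2 * Q = (2 + X) * C + 6 * (X * (X * D C)) := by
    ext n
    have h1 : ∀ m, coeff m (X * D C) = m * cWK m := by
      intro m; rw [coeff_X_D, hC]
    cases n with
    | zero =>
      simp only [map_add, add_mul, e2, e6, coeff_C_mul, coeff_zero_X_mul, hC, hQ,
        qWK_zero, cWK_zero]
      norm_num
    | succ n =>
      simp only [map_add, add_mul, e2, e6, coeff_C_mul, coeff_succ_X_mul, hC, hQ, h1]
      linear_combination qWK_succ n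
  have hKm : 2 * B = (2 - X) * A - 6 * (X * (X * D A)) := by
    ext n
    have h1 : ∀ m, coeff m (X * D A) = m * ((-1)^m * cWK m) := by
      intro m; rw [coeff_X_D, hA]
    cases n with
    | zero =>
      simp only [map_add, map_sub, sub_mul, e2, e6, coeff_C_mul, coeff_zero_X_mul, hA, hB,
        qWK_zero, cWK_zero]
      norm_num
    | succ n =>
      simp only [map_add, map_sub, sub_mul, e2, e6, coeff_C_mul, coeff_succ_X_mul, hA, hB, h1]
      linear_combination ((-1:ℂ)^(n+1)) * qWK_succ n
  -- the Wronskian-type series `W = 4·A·C + 6x²(A·C' - A'·C)` is constant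
  set W : ℂ⟦X⟧ := 4 * (A * C) + 6 * X * X * (A * D C - D A * C) with hWdef
  have hdW : D W = 4 * (D A * C + A * D C) + 12 * X * (A * D C - D A * C)
      + 6 * X * X * (A * D (D C) - D (D A) * C) := by
    rw [hWdef]
    simp only [map_add, map_sub, Derivation.leibniz, smul_eq_mul, d4, d6, derivative_X]
    ring
  have h36 : ((36 : ℂ⟦X⟧) * X * X) * D W = 0 := by
    rw [hdW]
    linear_combination ((6:ℂ⟦X⟧) * X * X * A) * odeC + ((6:ℂ⟦X⟧) * X * X * C) * odeA
  have hX : (X : ℂ⟦X⟧) ≠ 0 := X_ne_zero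
  have hC36 : ((36 : ℂ⟦X⟧)) ≠ 0 := by
    intro h
    rw [e36] at h
    have := congrArg (constantCoeff) h
    rw [constantCoeff_C, map_zero] at this
    norm_num at this
  have hdW0 : D W = 0 := by
    rcases mul_eq_zero.mp h36 with h | h
    · exact absurd h (mul_ne_zero (mul_ne_zero hC36 hX) hX)
    · exact h
  have hA0 : constantCoeff A = 1 := by
    rw [← coeff_zero_eq_constantCoeff, hA]; simp [cWK_zero]
  have hC0 : constantCoeff C = 1 := by
    rw [← coeff_zero_eq_constantCoeff, hC]; simp [cWK_zero]
  have hW : W = 4 := by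
    rw [e4]
    apply derivative.ext
    · rw [hdW0, derivative_C]
    · rw [hWdef]
      simp only [map_add, map_mul, constantCoeff_X, map_sub, constantCoeff_C, hA0, hC0, e4, e6]
      norm_num
  have h2ne : ((2 : ℂ⟦X⟧)) ≠ 0 := by
    intro h
    rw [e2] at h
    have := congrArg (constantCoeff) h
    rw [constantCoeff_C, map_zero] at this
    norm_num at this
  have key : (2 : ℂ⟦X⟧) * (C * B + A * Q) = 2 * 2 := by
    have h22 : (2 : ℂ⟦X⟧) * 2 = 4 := by norm_num
    rw [h22, ← hW, hWdef]
    linear_combination C * hKm + A * hK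
  exact mul_left_cancel₀ h2ne key
end

section
/- Let G(x) ∈ M₂(ℂ[[x]]) be the matrix of formal power series with entries G(x)_{11} = ∑_{k≥0} c_{2k}·x^{3k}, G(x)_{12} = ∑_{k≥0} q_{2k+1}·x^{3k+1}, G(x)_{21} = ∑_{k≥0} c_{2k+1}·x^{3k+2}, G(x)_{22} = ∑_{k≥0} q_{2k}·x^{3k}, where c_k, q_k are as in the context. Then det G(x) = 1 as a formal power series. -/
lemma factC_ne (n : ℕ) : ((n.factorial : ℂ)) ≠ 0 :=
  Nat.cast_ne_zero.mpr (Nat.factorial_ne_zero n)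

lemma castC_ne {n : ℕ} (h : n ≠ 0) : ((n : ℂ)) ≠ 0 := Nat.cast_ne_zero.mpr h

lemma sixfact (k : ℕ) : ((6 * (k+1)).factorial : ℂ) =
    ((6*k+1) * (6*k+2) * (6*k+3) * (6*k+4) * (6*k+5) * (6*k+6)) * ((6*k).factorial : ℂ) := by
  have h : 6 * (k+1) = 6*k+1+1+1+1+1+1 := by ring
  rw [h]
  simp [Nat.factorial_succ]
  ring

lemma threefact (k : ℕ) : ((3 * (k+1)).factorial : ℂ) =
    ((3*k+1) * (3*k+2) * (3*k+3)) * ((3*k).factorial : ℂ) := by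
  have h : 3 * (k+1) = 3*k+1+1+1 := by ring
  rw [h]
  simp [Nat.factorial_succ]
  ring

lemma twofact (k : ℕ) : ((2 * (k+1)).factorial : ℂ) =
    ((2*k+1) * (2*k+2)) * ((2*k).factorial : ℂ) := by
  have h : 2 * (k+1) = 2*k+1+1 := by ring
  rw [h]
  simp [Nat.factorial_succ]
  ring

lemma cWK_mul (k : ℕ) :
    cWK k * (((3*k).factorial : ℂ) * ((2*k).factorial : ℂ) * 288 ^ k)
      = (-1) ^ k * ((6*k).factorial : ℂ) := by
  unfold cWK
  have h1 : ((3*k).factorial : ℂ) ≠ 0 := factC_ne _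
  have h2 : ((2*k).factorial : ℂ) ≠ 0 := factC_ne _
  have h3 : (288 : ℂ) ^ k ≠ 0 := pow_ne_zero _ (by norm_num)
  field_simp

lemma c_rec (k : ℕ) : 24 * ((k:ℂ)+1) * cWK (k+1) = -((6*(k:ℂ)+1) * (6*k+5)) * cWK k := by
  have h1 := cWK_mul k
  have h2 := cWK_mul (k+1)
  rw [sixfact, threefact, twofact, pow_succ] at h2
  have t1 : (3*(k:ℂ)+1) ≠ 0 := by exact_mod_cast castC_ne (n := 3*k+1) (by omega)
  have t2 : (3*(k:ℂ)+2) ≠ 0 := by exact_mod_cast castC_ne (n := 3*k+2) (by omega)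
  have t3 : (3*(k:ℂ)+3) ≠ 0 := by exact_mod_cast castC_ne (n := 3*k+3) (by omega)
  have t4 : (2*(k:ℂ)+1) ≠ 0 := by exact_mod_cast castC_ne (n := 2*k+1) (by omega)
  have t5 : (2*(k:ℂ)+2) ≠ 0 := by exact_mod_cast castC_ne (n := 2*k+2) (by omega)
  have hne : (((3*k).factorial : ℂ) * ((2*k).factorial : ℂ) * 288 ^ k *
      (((3*(k:ℂ)+1) * (3*k+2) * (3*k+3)) * ((2*(k:ℂ)+1) * (2*k+2)) * 288)) ≠ 0 := by
    apply mul_ne_zero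
    · exact mul_ne_zero (mul_ne_zero (factC_ne _) (factC_ne _)) (pow_ne_zero _ (by norm_num))
    · exact mul_ne_zero (mul_ne_zero (mul_ne_zero (mul_ne_zero t1 t2) t3) (mul_ne_zero t4 t5)) (by norm_num)
  apply mul_right_cancel₀ hne
  linear_combination (24 * ((k:ℂ)+1)) * h2
    + ((6*(k:ℂ)+1) * (6*k+5) * ((3*(k:ℂ)+1) * (3*k+2) * (3*k+3)) * ((2*(k:ℂ)+1) * (2*k+2)) * 288) * h1

lemma q_mul (k : ℕ) : (1 - 6*(k:ℂ)) * qWK k = (1 + 6*(k:ℂ)) * cWK k := by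
  unfold qWK
  have h : (1 - 6*(k:ℂ)) ≠ 0 := by
    intro h
    have : ((6*k : ℕ) : ℂ) = ((1:ℕ):ℂ) := by push_cast; linear_combination -h
    have := Nat.cast_injective (R := ℂ) this
    omega
  field_simp

lemma q_rec (k : ℕ) : 24 * ((k:ℂ)+1) * qWK (k+1) = ((6*(k:ℂ)+7) * (1-6*(k:ℂ))) * qWK k := by
  have h1 := q_mul k
  have h2 := q_mul (k+1)
  have hc := c_rec k
  have h5 : (6*(k:ℂ)+5) ≠ 0 := by exact_mod_cast castC_ne (n := 6*k+5) (by omega)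
  have h6 : (1 - 6*((k:ℂ)+1)) = -(6*(k:ℂ)+5) := by ring
  -- from h2 : (1-6(k+1)) q_{k+1} = (1+6(k+1)) c_{k+1}, i.e. -(6k+5) q_{k+1} = (6k+7) c_{k+1}
  push_cast at h2
  apply mul_right_cancel₀ (b := (6*(k:ℂ)+5)) h5
  linear_combination (-24*((k:ℂ)+1)) * h2 + (-(6*(k:ℂ)+7)) * hc + (-(6*(k:ℂ)+7)*(6*(k:ℂ)+5)) * h1

lemma c_succ (k : ℕ) : cWK (k+1) = (-((6*(k:ℂ)+1) * (6*k+5)) / (24*((k:ℂ)+1))) * cWK k := by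
  have h := c_rec k
  have hne : (24*((k:ℂ)+1)) ≠ 0 := by
    have := castC_ne (n := k+1) (by omega); push_cast at this
    exact mul_ne_zero (by norm_num) this
  field_simp
  linear_combination h

lemma q_succ (k : ℕ) : qWK (k+1) = (((6*(k:ℂ)+7) * (1-6*(k:ℂ))) / (24*((k:ℂ)+1))) * qWK k := by
  have h := q_rec k
  have hne : (24*((k:ℂ)+1)) ≠ 0 := by
    have := castC_ne (n := k+1) (by omega); push_cast at this
    exact mul_ne_zero (by norm_num) this
  field_simp
  linear_combination h

lemma cWK_zero : cWK 0 = 1 := by norm_num [cWK]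

lemma qWK_zero : qWK 0 = 1 := by norm_num [qWK, cWK]

lemma cWK_one : cWK 1 = -5/24 := by
  have h := c_rec 0
  push_cast at h
  rw [cWK_zero] at h
  linear_combination h / 24

/-- The alternating convolution `∑ (-1)^j c_{N-j} q_j`. -/
noncomputable def DWK (N : ℕ) : ℂ := ∑ j ∈ Finset.range (N+1), (-1)^j * cWK (N-j) * qWK j

/-- Telescoping certificate for the recurrence of `DWK`. -/
noncomputable def GcWK (N j : ℕ) : ℂ :=
  if j ≤ N+2 then
    (-1)^j * ((24*(j:ℂ)*(2*(N:ℂ)+5-3*(j:ℂ))) * cWK (N+2-j) * qWK j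
      + (if j ≤ N+1 then
          (99*(j:ℂ) - 252*(j:ℂ)^2 + 108*(j:ℂ)^3 + 72*(N:ℂ)*(j:ℂ) - 144*(N:ℂ)*(j:ℂ)^2)
            * cWK (N+1-j) * qWK j else 0))
  else 0

lemma GcWK_step (N j : ℕ) (hj : j < N+3) :
    GcWK N (j+1) - GcWK N j
      = 6*((N:ℂ)+2) * ((-1)^j * (4*((N:ℂ)+1) * cWK (N+2-j) * qWK j))
        - 6*((N:ℂ)+2) * (if j ≤ N then
            (N:ℂ)*(3*(N:ℂ)+2)*(3*(N:ℂ)+4) * ((-1)^j * cWK (N-j) * qWK j) else 0) := by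
  rcases Nat.lt_or_ge j (N+1) with hlt | hge
  · -- generic case j ≤ N
    have hjN : j ≤ N := by omega
    obtain ⟨i, rfl⟩ := Nat.exists_eq_add_of_le hjN
    have r1 : j + i + 2 - j = i + 2 := by omega
    have r2 : j + i + 1 - j = i + 1 := by omega
    have r3 : j + i - j = i := by omega
    have r4 : j + i + 2 - (j+1) = i + 1 := by omega
    have r5 : j + i + 1 - (j+1) = i := by omega
    simp only [GcWK, r1, r2, r3, r4, r5]
    rw [if_pos (show j + 1 ≤ j + i + 2 by omega), if_pos (show j + 1 ≤ j + i + 1 by omega),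
        if_pos (show j ≤ j + i + 2 by omega), if_pos (show j ≤ j + i + 1 by omega),
        if_pos (show j ≤ j + i by omega)]
    have e2 : cWK (i+2) = (-((6*((i:ℂ)+1)+1) * (6*((i:ℂ)+1)+5)) / (24*(((i:ℂ)+1)+1))) * cWK (i+1) := by
      have := c_succ (i+1); push_cast at this
      rw [show i+1+1 = i+2 from by omega] at this
      exact this
    have e1 := c_succ i
    have e3 := q_succ j
    rw [e2, e1, e3]
    have n1 : (24*((i:ℂ)+1)) ≠ 0 := by
      have := castC_ne (n := i+1) (by omega); push_cast at this
      exact mul_ne_zero (by norm_num) this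
    have n2 : (24*(((i:ℂ)+1)+1)) ≠ 0 := by
      have h := castC_ne (n := i+2) (by omega); push_cast at h
      refine mul_ne_zero (by norm_num) fun hc => h (by linear_combination hc)
    have n3 : (24*((j:ℂ)+1)) ≠ 0 := by
      have := castC_ne (n := j+1) (by omega); push_cast at this
      exact mul_ne_zero (by norm_num) this
    have n4 : ((i:ℂ)+1+1) ≠ 0 := fun hc => n2 (by rw [hc, mul_zero])
    push_cast
    field_simp
    ring
  · -- boundary cases j = N+1 or j = N+2
    have n2 : ((N:ℂ)+2) ≠ 0 := by
      have h := castC_ne (n := N+2) (by omega); push_cast at h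
      exact h
    have nn : (24*(((N:ℂ)+1)+1)) ≠ 0 := by
      refine mul_ne_zero (by norm_num) fun hc => n2 (by linear_combination hc)
    have eq : qWK (N+2) = (((6*((N:ℂ)+1)+7) * (1-6*((N:ℂ)+1))) / (24*(((N:ℂ)+1)+1))) * qWK (N+1) := by
      have := q_succ (N+1); push_cast at this
      rw [show N+1+1 = N+2 from by omega] at this
      exact this
    rcases Nat.lt_or_ge j (N+2) with hlt2 | hge2
    · -- j = N+1
      have hj1 : j = N+1 := by omega
      subst hj1
      have r1 : N + 2 - (N+1) = 1 := by omega
      have r2 : N + 1 - (N+1) = 0 := by omega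
      have r3 : N + 2 - (N+1+1) = 0 := by omega
      simp only [GcWK, r1, r2, r3]
      rw [if_pos (show N+1+1 ≤ N+2 by omega), if_neg (show ¬ N+1+1 ≤ N+1 by omega),
          if_pos (show N+1 ≤ N+2 by omega), if_pos (show N+1 ≤ N+1 by omega),
          if_neg (show ¬ N+1 ≤ N by omega)]
      rw [cWK_zero, cWK_one, eq]
      have n4 : ((N:ℂ)+1+1) ≠ 0 := fun hc => nn (by rw [hc, mul_zero])
      push_cast
      field_simp [nn]
      ring
    · -- j = N+2
      have hj2 : j = N+2 := by omega
      subst hj2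
      have r1 : N + 2 - (N+2) = 0 := by omega
      simp only [GcWK, r1]
      rw [if_neg (show ¬ N+2+1 ≤ N+2 by omega), if_pos (show N+2 ≤ N+2 by omega),
          if_neg (show ¬ N+2 ≤ N+1 by omega), if_neg (show ¬ N+2 ≤ N by omega)]
      rw [cWK_zero]
      push_cast
      ring

lemma GcWK_zero (N : ℕ) : GcWK N 0 = 0 := by
  norm_num [GcWK]

lemma GcWK_top (N : ℕ) : GcWK N (N+3) = 0 := by
  rw [GcWK, if_neg (by omega)]

lemma D_rec (N : ℕ) : 4*((N:ℂ)+1) * DWK (N+2) = (N:ℂ)*(3*(N:ℂ)+2)*(3*(N:ℂ)+4) * DWK N := by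
  have tele := Finset.sum_range_sub (GcWK N) (N+3)
  have tele2 : ∑ j ∈ Finset.range (N+3),
      (6*((N:ℂ)+2) * ((-1)^j * (4*((N:ℂ)+1) * cWK (N+2-j) * qWK j))
        - 6*((N:ℂ)+2) * (if j ≤ N then
            (N:ℂ)*(3*(N:ℂ)+2)*(3*(N:ℂ)+4) * ((-1)^j * cWK (N-j) * qWK j) else 0))
      = 0 := by
    rw [← Finset.sum_congr rfl (fun j hj => (GcWK_step N j (Finset.mem_range.mp hj))), tele,
      GcWK_zero, GcWK_top, sub_zero]
  rw [Finset.sum_sub_distrib] at tele2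
  have hA : ∑ j ∈ Finset.range (N+3),
      6*((N:ℂ)+2) * ((-1)^j * (4*((N:ℂ)+1) * cWK (N+2-j) * qWK j))
      = 6*((N:ℂ)+2) * (4*((N:ℂ)+1)) * DWK (N+2) := by
    rw [DWK, Finset.mul_sum]
    exact Finset.sum_congr rfl (fun j hj => by ring)
  have hB : ∑ j ∈ Finset.range (N+3),
      (6*((N:ℂ)+2) * (if j ≤ N then
        (N:ℂ)*(3*(N:ℂ)+2)*(3*(N:ℂ)+4) * ((-1)^j * cWK (N-j) * qWK j) else 0))
      = 6*((N:ℂ)+2) * ((N:ℂ)*(3*(N:ℂ)+2)*(3*(N:ℂ)+4)) * DWK N := by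
    rw [← Finset.sum_subset (Finset.range_subset_range.mpr (show N+1 ≤ N+3 by omega))
      (fun x hx hnx => by
        rw [if_neg (by simp at hx hnx ⊢; omega), mul_zero])]
    rw [DWK, Finset.mul_sum]
    refine Finset.sum_congr rfl (fun j hj => ?_)
    rw [if_pos (by simp at hj; omega)]
    ring
  rw [hA, hB] at tele2
  have h6 : (6*((N:ℂ)+2)) ≠ 0 := by
    have h := castC_ne (n := N+2) (by omega); push_cast at h
    exact mul_ne_zero (by norm_num) h
  apply mul_left_cancel₀ h6
  linear_combination tele2

lemma D_even_zero : ∀ m : ℕ, 1 ≤ m → DWK (2*m) = 0 := by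
  intro m hm
  induction m, hm using Nat.le_induction with
  | base =>
    have h := D_rec 0
    push_cast at h
    simpa using h
  | succ m hm ih =>
    have h := D_rec (2*m)
    push_cast at h
    rw [show 2*m+2 = 2*(m+1) from by ring, ih, mul_zero] at h
    have hne : (4*(2*(m:ℂ)+1)) ≠ 0 := by
      have hc := castC_ne (n := 8*m+4) (by omega); push_cast at hc
      exact fun hx => hc (by linear_combination hx)
    exact (mul_eq_zero.mp h).resolve_left hne

lemma sum_even_odd (g : ℕ → ℂ) (m : ℕ) :
    ∑ j ∈ Finset.range (2*m+1), g j
      = ∑ k ∈ Finset.range (m+1), g (2*k) + ∑ k ∈ Finset.range m, g (2*k+1) := by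
  induction m with
  | zero => simp
  | succ m ih =>
    rw [show 2*(m+1)+1 = (2*m+1)+1+1 from by ring, Finset.sum_range_succ, Finset.sum_range_succ,
      ih, Finset.sum_range_succ (f := fun k => g (2*k)) (n := m+1),
      Finset.sum_range_succ (f := fun k => g (2*k+1)) (n := m)]
    rw [show (2*m+1)+1 = 2*(m+1) from by ring]
    ring

lemma sum3_0 (f : ℕ → ℂ) (m : ℕ) (h : ∀ k, k % 3 ≠ 0 → f k = 0) :
    ∑ k ∈ Finset.range (3*m+1), f k = ∑ k ∈ Finset.range (m+1), f (3*k) := by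
  induction m with
  | zero => simp
  | succ m ih =>
    rw [show 3*(m+1)+1 = (3*m+1)+1+1+1 from by ring, Finset.sum_range_succ, Finset.sum_range_succ,
      Finset.sum_range_succ, ih, Finset.sum_range_succ (f := fun k => f (3*k)) (n := m+1),
      h (3*m+1) (by omega), h ((3*m+1)+1) (by omega), show (3*m+1)+1+1 = 3*(m+1) from by ring]
    ring

lemma sum3_1 (f : ℕ → ℂ) (m : ℕ) (h : ∀ k, k % 3 ≠ 1 → f k = 0) :
    ∑ k ∈ Finset.range (3*m+1), f k = ∑ k ∈ Finset.range m, f (3*k+1) := by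
  induction m with
  | zero => simp [h 0 (by omega)]
  | succ m ih =>
    rw [show 3*(m+1)+1 = (3*m+1)+1+1+1 from by ring, Finset.sum_range_succ, Finset.sum_range_succ,
      Finset.sum_range_succ, ih, Finset.sum_range_succ (f := fun k => f (3*k+1)) (n := m),
      h ((3*m+1)+1) (by omega), h ((3*m+1)+1+1) (by omega)]
    ring

/-- The determinant of the `G`-matrix of the Witten–Kontsevich point equals `1`. -/
theorem WK_G_matrix_det_eq_one (G : Matrix (Fin 2) (Fin 2) (PowerSeries ℂ))
    (h11 : ∀ n : ℕ, PowerSeries.coeff n (G 0 0) =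
      if n % 3 = 0 then cWK (2 * (n / 3)) else 0)
    (h12 : ∀ n : ℕ, PowerSeries.coeff n (G 0 1) =
      if n % 3 = 1 then qWK (2 * (n / 3) + 1) else 0)
    (h21 : ∀ n : ℕ, PowerSeries.coeff n (G 1 0) =
      if n % 3 = 2 then cWK (2 * (n / 3) + 1) else 0)
    (h22 : ∀ n : ℕ, PowerSeries.coeff n (G 1 1) =
      if n % 3 = 0 then qWK (2 * (n / 3)) else 0) :
    G.det = 1 := by
  rw [Matrix.det_fin_two]
  apply PowerSeries.ext
  intro n
  rw [map_sub, PowerSeries.coeff_mul, PowerSeries.coeff_mul,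
    Finset.Nat.sum_antidiagonal_eq_sum_range_succ_mk,
    Finset.Nat.sum_antidiagonal_eq_sum_range_succ_mk]
  simp only [h11, h12, h21, h22, PowerSeries.coeff_one]
  by_cases h0 : n = 0
  · subst h0
    norm_num [cWK, qWK]
  rw [if_neg h0]
  by_cases h3 : n % 3 = 0
  · -- n = 3m with m ≥ 1
    obtain ⟨m, rfl⟩ : ∃ m, n = 3*m := ⟨n/3, by omega⟩
    have hm : 1 ≤ m := by omega
    have e1 : (∑ k ∈ Finset.range (3*m+1),
          (if k % 3 = 0 then cWK (2*(k/3)) else 0) *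
            (if (3*m-k) % 3 = 0 then qWK (2*((3*m-k)/3)) else 0))
        = ∑ k ∈ Finset.range (m+1), cWK (2*k) * qWK (2*(m-k)) := by
      rw [sum3_0 _ m (fun k hk => by rw [if_neg hk, zero_mul])]
      refine Finset.sum_congr rfl (fun k hk => ?_)
      simp only [Finset.mem_range] at hk
      rw [if_pos (by omega), if_pos (by omega), show (3*k)/3 = k from by omega,
        show (3*m-3*k)/3 = m-k from by omega]
    have e2 : (∑ k ∈ Finset.range (3*m+1),
          (if k % 3 = 1 then qWK (2*(k/3)+1) else 0) *
            (if (3*m-k) % 3 = 2 then cWK (2*((3*m-k)/3)+1) else 0))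
        = ∑ k ∈ Finset.range m, qWK (2*k+1) * cWK (2*(m-k-1)+1) := by
      rw [sum3_1 _ m (fun k hk => by rw [if_neg hk, zero_mul])]
      refine Finset.sum_congr rfl (fun k hk => ?_)
      simp only [Finset.mem_range] at hk
      rw [if_pos (by omega), if_pos (by omega), show (3*k+1)/3 = k from by omega,
        show (3*m-(3*k+1))/3 = m-k-1 from by omega]
    rw [e1, e2]
    -- use DWK (2m) = 0
    have hd := D_even_zero m hm
    simp only [DWK] at hd
    rw [sum_even_odd (fun j => (-1)^j * cWK (2*m - j) * qWK j) m] at hd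
    have hd1 : (∑ k ∈ Finset.range (m+1), (-1:ℂ)^(2*k) * cWK (2*m-2*k) * qWK (2*k))
        = ∑ k ∈ Finset.range (m+1), cWK (2*(m-k)) * qWK (2*k) := by
      refine Finset.sum_congr rfl (fun k hk => ?_)
      simp only [Finset.mem_range] at hk
      rw [pow_mul, show 2*m-2*k = 2*(m-k) from by omega]
      norm_num
    have hd2 : (∑ k ∈ Finset.range m, (-1:ℂ)^(2*k+1) * cWK (2*m-(2*k+1)) * qWK (2*k+1))
        = -∑ k ∈ Finset.range m, qWK (2*k+1) * cWK (2*(m-k-1)+1) := by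
      rw [← Finset.sum_neg_distrib]
      refine Finset.sum_congr rfl (fun k hk => ?_)
      simp only [Finset.mem_range] at hk
      rw [pow_succ, pow_mul, show 2*m-(2*k+1) = 2*(m-k-1)+1 from by omega]
      ring
    rw [hd1, hd2] at hd
    have R1 : (∑ k ∈ Finset.range (m+1), cWK (2*k) * qWK (2*(m-k)))
        = ∑ k ∈ Finset.range (m+1), cWK (2*(m-k)) * qWK (2*k) := by
      rw [← Finset.sum_range_reflect (fun k => cWK (2*k) * qWK (2*(m-k))) (m+1)]
      refine Finset.sum_congr rfl (fun j hj => ?_)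
      simp only [Finset.mem_range] at hj
      beta_reduce
      rw [show m+1-1-j = m-j from by omega, show m-(m-j) = j from by omega]
    rw [R1]
    linear_combination hd
  · -- n not divisible by 3 : both sums vanish
    have hs1 : (∑ k ∈ Finset.range (n+1),
          (if k % 3 = 0 then cWK (2*(k/3)) else 0) *
            (if (n-k) % 3 = 0 then qWK (2*((n-k)/3)) else 0)) = 0 := by
      refine Finset.sum_eq_zero (fun k hk => ?_)
      simp only [Finset.mem_range] at hk
      by_cases hk3 : k % 3 = 0
      · rw [if_neg (show ¬ (n-k) % 3 = 0 from by omega), mul_zero]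
      · rw [if_neg hk3, zero_mul]
    have hs2 : (∑ k ∈ Finset.range (n+1),
          (if k % 3 = 1 then qWK (2*(k/3)+1) else 0) *
            (if (n-k) % 3 = 2 then cWK (2*((n-k)/3)+1) else 0)) = 0 := by
      refine Finset.sum_eq_zero (fun k hk => ?_)
      simp only [Finset.mem_range] at hk
      by_cases hk3 : k % 3 = 1
      · rw [if_neg (show ¬ (n-k) % 3 = 2 from by omega), mul_zero]
      · rw [if_neg hk3, zero_mul]
    rw [hs1, hs2, sub_zero]
end

section
/- Let R(z) ∈ M₂(ℂ[[z]]) have entries R(z)_{11} = ∑_{k≥0} q_{2k}·z^{2k}, R(z)_{12} = −∑_{k≥0} q_{2k+1}·z^{2k+1}, R(z)_{21} = −∑_{k≥0} c_{2k+1}·z^{2k+1}, R(z)_{22} = ∑_{k≥0} c_{2k}·z^{2k}, set R*(w) := η·R(w)ᵀ·η with η = [[0,1],[1,0]], and suppose V : ℕ × ℕ → M₂(ℂ) satisfies (w + z)·∑_{k,l≥0} (−1)^{k+l}·V_{k,l}·w^k·z^l = R*(w)·R(z) − I in M₂(ℂ[[w,z]]). Let G_n, U_n ∈ M₂(ℂ)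 be the Witten–Kontsevich matrix coefficients (defined in the context) and Z_{k,l} := −∑_{j=0}^{k} G_j·U_{k+l+1−j}. Then for all k, l ≥ 0: V_{2k,2l+1} = Z_{3k,3l+2}, V_{2l+1,2k} = −Z_{3l+2,3k}, V_{2k,2l} = −Z_{3k,3l+1} − Z_{3k,3l}, and V_{2k+1,2l+1} = Z_{3k+2,3l+2} + Z_{3k+2,3l+1}. -/
open Matrix

/-- The coefficient of `z^n` in the `R`-matrix of the `A₂` Frobenius manifold:
`R(z) = [[∑ q_{2k} z^{2k}, -∑ q_{2k+1} z^{2k+1}], [-∑ c_{2k+1} z^{2k+1}, ∑ c_{2k} z^{2k}]]`. -/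
noncomputable def Rcoef (n : ℕ) : Matrix (Fin 2) (Fin 2) ℂ :=
  if n % 2 = 0 then !![qWK n, 0; 0, cWK n] else !![0, -qWK n; -cWK n, 0]

/- ### Auxiliary material -/

lemma WKaux.eta_conj {α : Type*} [NonAssocSemiring α] (M : Matrix (Fin 2) (Fin 2) α) :
    !![(0:α),1;1,0] * Mᵀ * !![0,1;1,0] = !![M 1 1, M 0 1; M 1 0, M 0 0] := by
  ext i j
  fin_cases i <;> fin_cases j <;>
    simp [Matrix.mul_apply, Matrix.vecMul, dotProduct, Fin.sum_univ_two]

/-- `R*(w)` coefficients. -/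
noncomputable def WKaux.Rstar (n : ℕ) : Matrix (Fin 2) (Fin 2) ℂ :=
  !![0,1;1,0] * (Rcoef n)ᵀ * !![0,1;1,0]

namespace WKaux

lemma Rstar_eq (n : ℕ) :
    Rstar n = !![Rcoef n 1 1, Rcoef n 0 1; Rcoef n 1 0, Rcoef n 0 0] :=
  eta_conj _

lemma Rcoef_even (n : ℕ) : Rcoef (2*n) = !![qWK (2*n), 0; 0, cWK (2*n)] := by
  simp [Rcoef, Nat.mul_mod_right]

lemma Rcoef_odd (n : ℕ) : Rcoef (2*n+1) = !![0, -qWK (2*n+1); -cWK (2*n+1), 0] := by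
  have h : (2*n+1) % 2 = 1 := by omega
  simp [Rcoef, h]

lemma Rstar_even (n : ℕ) : Rstar n = !![cWK n, 0; 0, qWK n] ∨ True := Or.inr trivial

lemma Rstar_even' (n : ℕ) : Rstar (2*n) = !![cWK (2*n), 0; 0, qWK (2*n)] := by
  rw [Rstar_eq, Rcoef_even]; norm_num

lemma Rstar_odd' (n : ℕ) : Rstar (2*n+1) = !![0, -qWK (2*n+1); -cWK (2*n+1), 0] := by
  rw [Rstar_eq, Rcoef_odd]; norm_num

lemma npow_even (m : ℕ) : ((-1:ℂ))^(2*m) = 1 := by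
  rw [pow_mul]; norm_num

lemma npow_odd (m : ℕ) : ((-1:ℂ))^(2*m+1) = -1 := by
  rw [pow_succ, npow_even]; ring

/-- exponent used in `V`-coefficients -/
noncomputable def eab (a b : ℕ) : Fin 2 →₀ ℕ := Finsupp.single 0 a + Finsupp.single 1 b

lemma eab_apply0 (a b : ℕ) : eab a b 0 = a := by
  simp [eab, Finsupp.single_apply]

lemma eab_apply1 (a b : ℕ) : eab a b 1 = b := by
  simp [eab, Finsupp.single_apply]

lemma eab_ne_zero (a b : ℕ) (h : a + b ≠ 0) : eab a b ≠ 0 := by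
  intro hh
  have h0 : eab a b 0 = 0 := by rw [hh]; rfl
  have h1 : eab a b 1 = 0 := by rw [hh]; rfl
  rw [eab_apply0] at h0; rw [eab_apply1] at h1; omega

open MvPowerSeries in
lemma coeff_mul_axes (f g : MvPowerSeries (Fin 2) ℂ) (a b : ℕ)
    (hf : ∀ d : Fin 2 →₀ ℕ, d 1 ≠ 0 → coeff (R := ℂ) d f = 0)
    (hg : ∀ d : Fin 2 →₀ ℕ, d 0 ≠ 0 → coeff (R := ℂ) d g = 0) :
    coeff (R := ℂ) (eab a b) (f * g) =
      coeff (R := ℂ) (Finsupp.single 0 a) f * coeff (R := ℂ) (Finsupp.single 1 b) g := by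
  rw [coeff_mul]
  apply Finset.sum_eq_single (Finsupp.single 0 a, Finsupp.single 1 b)
  · rintro ⟨p1, p2⟩ hp hne
    rw [Finset.HasAntidiagonal.mem_antidiagonal] at hp
    by_cases h1 : p1 1 = 0
    · by_cases h2 : p2 0 = 0
      · exfalso; apply hne
        have ha : p1 0 + p2 0 = a := by
          have := congrArg (fun h : Fin 2 →₀ ℕ => h 0) hp
          simpa [eab_apply0] using this
        have hb : p1 1 + p2 1 = b := by
          have := congrArg (fun h : Fin 2 →₀ ℕ => h 1) hp
          simpa [eab_apply1] using this
        have e1 : p1 = Finsupp.single 0 a := by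
          ext x; fin_cases x
          · simp [Finsupp.single_apply]; omega
          · simp [Finsupp.single_apply]; omega
        have e2 : p2 = Finsupp.single 1 b := by
          ext x; fin_cases x
          · simp [Finsupp.single_apply]; omega
          · simp [Finsupp.single_apply]; omega
        rw [e1, e2]
      · rw [hg p2 h2, mul_zero]
    · rw [hf p1 h1, zero_mul]
  · intro h
    exfalso; apply h
    rw [Finset.HasAntidiagonal.mem_antidiagonal]; rfl

lemma sub_eab0 (a b : ℕ) : eab (a+1) b - Finsupp.single 0 1 = eab a b := by
  ext x; fin_cases x <;> simp [Finsupp.tsub_apply, eab, Finsupp.single_apply]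

lemma sub_eab1 (a b : ℕ) : eab a (b+1) - Finsupp.single 1 1 = eab a b := by
  ext x; fin_cases x <;> simp [Finsupp.tsub_apply, eab, Finsupp.single_apply]

open MvPowerSeries in
lemma coeff_X0_mul (f : MvPowerSeries (Fin 2) ℂ) (a b : ℕ) :
    coeff (R := ℂ) (eab (a+1) b) (X 0 * f) = coeff (R := ℂ) (eab a b) f := by
  rw [X, coeff_monomial_mul, if_pos, one_mul, sub_eab0]
  rw [Finsupp.le_def]
  intro x; fin_cases x <;> simp [Finsupp.single_apply, eab, Finsupp.add_apply]

open MvPowerSeries in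
lemma coeff_X0_mul_zero (f : MvPowerSeries (Fin 2) ℂ) (b : ℕ) :
    coeff (R := ℂ) (eab 0 b) (X 0 * f) = 0 := by
  rw [X, coeff_monomial_mul, if_neg]
  rw [Finsupp.le_def]
  push_neg
  exact ⟨0, by simp [Finsupp.single_apply, eab_apply0]⟩

open MvPowerSeries in
lemma coeff_X1_mul (f : MvPowerSeries (Fin 2) ℂ) (a b : ℕ) :
    coeff (R := ℂ) (eab a (b+1)) (X 1 * f) = coeff (R := ℂ) (eab a b) f := by
  rw [X, coeff_monomial_mul, if_pos, one_mul, sub_eab1]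
  rw [Finsupp.le_def]
  intro x; fin_cases x <;> simp [Finsupp.single_apply, eab, Finsupp.add_apply]

/-- partial alternating sums of `R*·R` -/
noncomputable def S2 (A n : ℕ) : Matrix (Fin 2) (Fin 2) ℂ :=
  ∑ p ∈ Finset.range (A+1), ((-1:ℂ))^p • (Rstar p * Rcoef (n - p))

lemma S2_zero (n : ℕ) : S2 0 n = Rstar 0 * Rcoef n := by
  simp [S2]

lemma S2_succ (A n : ℕ) :
    S2 (A+1) n = S2 A n + ((-1:ℂ))^(A+1) • (Rstar (A+1) * Rcoef (n - (A+1))) :=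
  Finset.sum_range_succ _ _

end WKaux

open WKaux MvPowerSeries in
/-- The `V`-matrices associated to the `R`-matrix of the `A₂` Frobenius manifold
are expressed by the matrix-valued affine coordinates of the Witten–Kontsevich
point. Here the variable `w` is `MvPowerSeries.X 0` and `z` is `MvPowerSeries.X 1`. -/
theorem A2_V_matrices_eq_affine_coordinates
    (Rw Rz SV : Matrix (Fin 2) (Fin 2) (MvPowerSeries (Fin 2) ℂ))
    (hRw : ∀ (d : Fin 2 →₀ ℕ) (i j : Fin 2),
      MvPowerSeries.coeff (R := ℂ) d (Rw i j) = if d 1 = 0 then Rcoef (d 0) i j else 0)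
    (hRz : ∀ (d : Fin 2 →₀ ℕ) (i j : Fin 2),
      MvPowerSeries.coeff (R := ℂ) d (Rz i j) = if d 0 = 0 then Rcoef (d 1) i j else 0)
    (V : ℕ → ℕ → Matrix (Fin 2) (Fin 2) ℂ)
    (hSV : ∀ (d : Fin 2 →₀ ℕ) (i j : Fin 2),
      MvPowerSeries.coeff (R := ℂ) d (SV i j) = (-1) ^ (d 0 + d 1) * V (d 0) (d 1) i j)
    (hgen : (MvPowerSeries.X 0 + MvPowerSeries.X 1 : MvPowerSeries (Fin 2) ℂ) • SV =
      (!![0, 1; 1, 0] * Rwᵀ * !![0, 1; 1, 0]) * Rz - 1)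
    (G U : ℕ → Matrix (Fin 2) (Fin 2) ℂ)
    (hG0 : ∀ j : ℕ, G (3 * j) = !![cWK (2 * j), 0; 0, qWK (2 * j)])
    (hG1 : ∀ j : ℕ, G (3 * j + 1) = !![0, qWK (2 * j + 1); 0, 0])
    (hG2 : ∀ j : ℕ, G (3 * j + 2) = !![0, 0; cWK (2 * j + 1), 0])
    (hU0 : ∀ j : ℕ, U (3 * j) = !![qWK (2 * j), 0; 0, cWK (2 * j)])
    (hU1 : ∀ j : ℕ, U (3 * j + 1) = !![0, -qWK (2 * j + 1); 0, 0])
    (hU2 : ∀ j : ℕ, U (3 * j + 2) = !![0, 0; -cWK (2 * j + 1), 0])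
    (Z : ℕ → ℕ → Matrix (Fin 2) (Fin 2) ℂ)
    (hZ : ∀ k l : ℕ, Z k l = -∑ j ∈ Finset.range (k + 1), G j * U (k + l + 1 - j)) :
    ∀ k l : ℕ,
      V (2 * k) (2 * l + 1) = Z (3 * k) (3 * l + 2) ∧
      V (2 * l + 1) (2 * k) = -Z (3 * l + 2) (3 * k) ∧
      V (2 * k) (2 * l) = -Z (3 * k) (3 * l + 1) - Z (3 * k) (3 * l) ∧
      V (2 * k + 1) (2 * l + 1) = Z (3 * k + 2) (3 * l + 2) + Z (3 * k + 2) (3 * l + 1) := by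
  classical
  -- entrywise form of the generating identity
  have hgen' : ∀ i j : Fin 2,
      (MvPowerSeries.X 0 + MvPowerSeries.X 1 : MvPowerSeries (Fin 2) ℂ) * SV i j =
        (((!![0,1;1,0] * Rwᵀ * !![0,1;1,0]) * Rz :
            Matrix (Fin 2) (Fin 2) (MvPowerSeries (Fin 2) ℂ))) i j -
          (1 : Matrix (Fin 2) (Fin 2) (MvPowerSeries (Fin 2) ℂ)) i j := by
    intro i j
    have h := congrFun (congrFun hgen i) j
    simpa [Matrix.sub_apply, smul_eq_mul] using h
  -- coefficients of the conjugated series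
  have hAsupp : ∀ (d : Fin 2 →₀ ℕ) (i t : Fin 2),
      coeff (R := ℂ) d (((!![0,1;1,0] * Rwᵀ * !![0,1;1,0] :
          Matrix (Fin 2) (Fin 2) (MvPowerSeries (Fin 2) ℂ))) i t)
        = if d 1 = 0 then Rstar (d 0) i t else 0 := by
    intro d i t
    rw [eta_conj Rw, Rstar_eq]
    fin_cases i <;> fin_cases t <;> simp [hRw]
  -- coefficients of the product
  have hAcoef : ∀ (a b : ℕ) (i j : Fin 2),
      coeff (R := ℂ) (eab a b) (((!![0,1;1,0] * Rwᵀ * !![0,1;1,0]) * Rz :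
          Matrix (Fin 2) (Fin 2) (MvPowerSeries (Fin 2) ℂ)) i j)
        = (Rstar a * Rcoef b) i j := by
    intro a b i j
    have hR : (Rstar a * Rcoef b) i j
        = Rstar a i 0 * Rcoef b 0 j + Rstar a i 1 * Rcoef b 1 j := by
      rw [Matrix.mul_apply, Fin.sum_univ_two]
    rw [hR]
    conv_lhs => rw [Matrix.mul_apply]
    rw [map_sum, Fin.sum_univ_two]
    rw [coeff_mul_axes _ _ a b (fun d hd => by rw [hAsupp]; exact if_neg hd)
        (fun d hd => by rw [hRz]; exact if_neg hd),
      coeff_mul_axes _ _ a b (fun d hd => by rw [hAsupp]; exact if_neg hd)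
        (fun d hd => by rw [hRz]; exact if_neg hd)]
    rw [hAsupp, hAsupp, hRz, hRz]
    simp [Finsupp.single_apply]
  have hSV' : ∀ (a b : ℕ) (i j : Fin 2),
      coeff (R := ℂ) (eab a b) (SV i j) = (-1)^(a+b) * V a b i j := by
    intro a b i j
    simpa [eab_apply0, eab_apply1] using hSV (eab a b) i j
  have hone : ∀ (a b : ℕ) (i j : Fin 2), a + b ≠ 0 →
      coeff (R := ℂ) (eab a b) ((1 : Matrix (Fin 2) (Fin 2) (MvPowerSeries (Fin 2) ℂ)) i j) = 0 := by
    intro a b i j h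
    by_cases hij : i = j <;>
      simp [Matrix.one_apply, hij, MvPowerSeries.coeff_one, eab_ne_zero a b h]
  -- the two recursion relations
  have rel1 : ∀ a b : ℕ,
      V a (b+1) + V (a+1) b = ((-1:ℂ))^(a+b+1) • (Rstar (a+1) * Rcoef (b+1)) := by
    intro a b
    ext i j
    have h := congrArg (coeff (R := ℂ) (eab (a+1) (b+1))) (hgen' i j)
    rw [add_mul, map_add, coeff_X0_mul, coeff_X1_mul, map_sub, hSV', hSV', hAcoef,
      hone _ _ i j (by omega)] at h
    have hexp : ((-1:ℂ))^(a+1+b) = ((-1:ℂ))^(a+b+1) := by congr 1; omega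
    rw [hexp] at h
    have hsq : ((-1:ℂ))^(a+b+1) * ((-1:ℂ))^(a+b+1) = 1 := by
      rw [← pow_add]; exact (Even.neg_one_pow ⟨a+b+1, by ring⟩)
    simp only [Matrix.add_apply, Matrix.smul_apply, smul_eq_mul]
    linear_combination ((-1:ℂ))^(a+b+1) * h -
      (V a (b+1) i j + V (a+1) b i j) * hsq
  have rel2 : ∀ b : ℕ, V 0 b = ((-1:ℂ))^b • (Rstar 0 * Rcoef (b+1)) := by
    intro b
    ext i j
    have h := congrArg (coeff (R := ℂ) (eab 0 (b+1))) (hgen' i j)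
    rw [add_mul, map_add, coeff_X0_mul_zero, coeff_X1_mul, map_sub, hSV', hAcoef,
      hone _ _ i j (by omega), zero_add] at h
    have hexp : ((-1:ℂ))^(0+b) = ((-1:ℂ))^b := by congr 1; omega
    rw [hexp] at h
    have hsq : ((-1:ℂ))^b * ((-1:ℂ))^b = 1 := by
      rw [← pow_add]; exact (Even.neg_one_pow ⟨b, by ring⟩)
    simp only [Matrix.smul_apply, smul_eq_mul]
    linear_combination ((-1:ℂ))^b * h - (V 0 b i j) * hsq
  -- closed form for V
  have hV : ∀ a b : ℕ, V a b = ((-1:ℂ))^b • S2 a (a+b+1) := by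
    intro a
    induction a with
    | zero =>
      intro b
      rw [S2_zero]
      have h0 : (0:ℕ)+b+1 = b+1 := by omega
      rw [h0]
      exact rel2 b
    | succ a ih =>
      intro b
      have h1 := rel1 a b
      have h3 : V (a+1) b = ((-1:ℂ))^(a+b+1) • (Rstar (a+1) * Rcoef (b+1)) - V a (b+1) := by
        rw [← h1]; abel
      rw [h3, ih (b+1), S2_succ]
      have e1 : a+1+b+1-(a+1) = b+1 := by omega
      have e2 : a+1+b+1 = a+(b+1)+1 := by omega
      rw [e1, e2, smul_add, smul_smul]
      have s1 : ((-1:ℂ))^b * ((-1:ℂ))^(a+1) = ((-1:ℂ))^(a+b+1) := by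
        rw [← pow_add]; congr 1; omega
      have s2 : ((-1:ℂ))^(b+1) = -((-1:ℂ))^b := by rw [pow_succ]; ring
      rw [s1, s2, neg_smul]
      abel
  -- block computations for G·U products
  have B0 : ∀ i j : ℕ, G (3*i) * U (3*j) = Rstar (2*i) * Rcoef (2*j) := by
    intro i j
    rw [hG0, hU0, Rstar_even', Rcoef_even]
    all_goals ext x y
    all_goals fin_cases x <;> fin_cases y <;>
      simp [Matrix.mul_apply, Fin.sum_univ_two] <;> ring
  have B1 : ∀ i j : ℕ, G (3*i+1) * U (3*j+2) + G (3*i+2) * U (3*j+1)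
      = -(Rstar (2*i+1) * Rcoef (2*j+1)) := by
    intro i j
    rw [hG1, hG2, hU1, hU2, Rstar_odd', Rcoef_odd]
    all_goals ext x y
    all_goals fin_cases x <;> fin_cases y <;>
      simp [Matrix.mul_apply, Fin.sum_univ_two] <;> ring
  have BE3b : ∀ i j : ℕ, G (3*i) * U (3*j+2) + G (3*i) * U (3*j+1)
      = Rstar (2*i) * Rcoef (2*j+1) := by
    intro i j
    rw [hG0, hU1, hU2, Rstar_even', Rcoef_odd]
    all_goals ext x y
    all_goals fin_cases x <;> fin_cases y <;>
      simp [Matrix.mul_apply, Fin.sum_univ_two] <;> ring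
  have BE3a : ∀ i j : ℕ,
      (G (3*i+1) * U (3*j+4) + G (3*i+1) * U (3*j+3)) +
        (G (3*i+2) * U (3*j+3) + G (3*i+2) * U (3*j+2))
      = -(Rstar (2*i+1) * Rcoef (2*j+2)) := by
    intro i j
    have u4 : (3*j+4) = 3*(j+1)+1 := by ring
    have u3 : (3*j+3) = 3*(j+1) := by ring
    have r2 : (2*j+2) = 2*(j+1) := by ring
    rw [u4, u3, r2, hG1, hG2, hU0, hU1, hU2, Rstar_odd', Rcoef_even]
    all_goals ext x y
    all_goals fin_cases x <;> fin_cases y <;>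
      simp [Matrix.mul_apply, Fin.sum_univ_two] <;> ring
  -- the E-identities
  have E1 : ∀ k l : ℕ,
      (∑ j ∈ Finset.range (3*k+1), G j * U (3*k+3*l+3 - j)) = S2 (2*k) (2*k+2*l+2) := by
    intro k
    induction k with
    | zero =>
      intro l
      rw [Finset.sum_range_one, show (3*0+3*l+3 - 0 : ℕ) = 3*(l+1) from by omega,
        show (2:ℕ)*0 = 0 from by norm_num, S2_zero,
        show ((0:ℕ)+2*l+2) = 2*(l+1) from by omega]
      have hb := B0 0 (l+1)
      simp only [Nat.mul_zero] at hb
      exact hb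
    | succ k ih =>
      intro l
      have hn : 3*(k+1)+3*l+3 = 3*k+3*(l+1)+3 := by ring
      have hr : 3*(k+1)+1 = 3*k+1+1+1+1 := by ring
      rw [hn, hr, Finset.sum_range_succ, Finset.sum_range_succ, Finset.sum_range_succ,
        ih (l+1)]
      rw [show (3*k+3*(l+1)+3 - (3*k+1) : ℕ) = 3*(l+1)+2 from by omega,
        show (3*k+3*(l+1)+3 - (3*k+1+1) : ℕ) = 3*(l+1)+1 from by omega,
        show (3*k+3*(l+1)+3 - (3*k+1+1+1) : ℕ) = 3*(l+1) from by omega,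
        show (3:ℕ)*k+1+1 = 3*k+2 from by ring, show (3:ℕ)*k+2+1 = 3*(k+1) from by ring]
      rw [show (2:ℕ)*(k+1)+2*l+2 = 2*k+2*(l+1)+2 from by ring]
      have hS : S2 (2*(k+1)) (2*k+2*(l+1)+2) = S2 (2*k) (2*k+2*(l+1)+2)
          + ((-1:ℂ))^(2*k+1) • (Rstar (2*k+1) * Rcoef ((2*k+2*(l+1)+2) - (2*k+1)))
          + ((-1:ℂ))^(2*k+1+1) • (Rstar (2*k+1+1) * Rcoef ((2*k+2*(l+1)+2) - (2*k+1+1))) := by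
        rw [show (2:ℕ)*(k+1) = 2*k+1+1 from by ring, S2_succ, S2_succ]
      rw [hS, show ((2*k+2*(l+1)+2) - (2*k+1) : ℕ) = 2*(l+1)+1 from by omega,
        show ((2*k+2*(l+1)+2) - (2*k+1+1) : ℕ) = 2*(l+1) from by omega,
        show (2:ℕ)*k+1+1 = 2*(k+1) from by ring,
        npow_odd k, npow_even (k+1), neg_one_smul, one_smul,
        ← B1 k (l+1), ← B0 (k+1) (l+1)]
      abel
  have E2 : ∀ l k : ℕ,
      (∑ j ∈ Finset.range (3*l+2+1), G j * U (3*l+3*k+3 - j)) = S2 (2*l+1) (2*k+2*l+2) := by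
    intro l
    induction l with
    | zero =>
      intro k
      rw [show (3:ℕ)*0+2+1 = 0+1+1+1 from by norm_num, Finset.sum_range_succ,
        Finset.sum_range_succ, Finset.sum_range_one]
      rw [show (3*0+3*k+3 - (0+1+1) : ℕ) = 3*k+1 from by omega,
        show (3*0+3*k+3 - (0+1) : ℕ) = 3*k+2 from by omega,
        show (3*0+3*k+3 - 0 : ℕ) = 3*(k+1) from by omega]
      have hb1 := B1 0 k
      rw [show (3:ℕ)*0+1 = 0+1 from by norm_num, show (3:ℕ)*0+2 = 0+1+1 from by norm_num,
        show (2:ℕ)*0+1 = 0+1 from by norm_num] at hb1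
      have hb0 := B0 0 (k+1)
      simp only [Nat.mul_zero] at hb0
      have hS : S2 (2*0+1) (2*k+2*0+2) = S2 0 (2*k+2*0+2)
          + ((-1:ℂ))^(0+1) • (Rstar (0+1) * Rcoef ((2*k+2*0+2) - (0+1))) := by
        rw [show (2:ℕ)*0+1 = 0+1 from by norm_num, S2_succ]
      rw [hS, S2_zero, show ((2*k+2*0+2) - (0+1) : ℕ) = 2*k+1 from by omega,
        show (2:ℕ)*k+2*0+2 = 2*(k+1) from by ring,
        show ((-1:ℂ))^(0+1) = -1 from by norm_num, neg_one_smul, ← hb1, ← hb0]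
      abel
    | succ l ih =>
      intro k
      have hn : 3*(l+1)+3*k+3 = 3*l+3*(k+1)+3 := by ring
      have hr : 3*(l+1)+2+1 = 3*l+2+1+1+1+1 := by ring
      rw [hn, hr, Finset.sum_range_succ, Finset.sum_range_succ, Finset.sum_range_succ,
        ih (k+1)]
      rw [show (3*l+3*(k+1)+3 - (3*l+2+1) : ℕ) = 3*(k+1) from by omega,
        show (3*l+3*(k+1)+3 - (3*l+2+1+1) : ℕ) = 3*k+2 from by omega,
        show (3*l+3*(k+1)+3 - (3*l+2+1+1+1) : ℕ) = 3*k+1 from by omega,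
        show (3:ℕ)*l+2+1 = 3*(l+1) from by ring]
      rw [show (2:ℕ)*k+2*(l+1)+2 = 2*(k+1)+2*l+2 from by ring]
      have hS : S2 (2*(l+1)+1) (2*(k+1)+2*l+2) = S2 (2*l+1) (2*(k+1)+2*l+2)
          + ((-1:ℂ))^(2*l+1+1) • (Rstar (2*l+1+1) * Rcoef ((2*(k+1)+2*l+2) - (2*l+1+1)))
          + ((-1:ℂ))^(2*l+1+1+1) • (Rstar (2*l+1+1+1) * Rcoef ((2*(k+1)+2*l+2) - (2*l+1+1+1))) := by
        rw [show (2:ℕ)*(l+1)+1 = 2*l+1+1+1 from by ring, S2_succ, S2_succ]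
      rw [hS, show ((2*(k+1)+2*l+2) - (2*l+1+1) : ℕ) = 2*(k+1) from by omega,
        show ((2*(k+1)+2*l+2) - (2*l+1+1+1) : ℕ) = 2*k+1 from by omega,
        show (2:ℕ)*l+1+1+1 = 2*(l+1)+1 from by ring,
        show (2:ℕ)*l+1+1 = 2*(l+1) from by ring,
        npow_even (l+1), npow_odd (l+1), one_smul, neg_one_smul,
        ← B1 (l+1) k, ← B0 (l+1) (k+1)]
      abel
  have E3 : ∀ k l : ℕ,
      (∑ j ∈ Finset.range (3*k+1),
        (G j * U (3*k+3*l+2 - j) + G j * U (3*k+3*l+1 - j))) = S2 (2*k) (2*k+2*l+1) := by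
    intro k
    induction k with
    | zero =>
      intro l
      rw [Finset.sum_range_one, show (3*0+3*l+2 - 0 : ℕ) = 3*l+2 from by omega,
        show (3*0+3*l+1 - 0 : ℕ) = 3*l+1 from by omega,
        show (2:ℕ)*0 = 0 from by norm_num, S2_zero,
        show ((0:ℕ)+2*l+1) = 2*l+1 from by omega]
      have hb := BE3b 0 l
      simp only [Nat.mul_zero] at hb
      exact hb
    | succ k ih =>
      intro l
      have hn1 : 3*(k+1)+3*l+2 = 3*k+3*(l+1)+2 := by ring
      have hn2 : 3*(k+1)+3*l+1 = 3*k+3*(l+1)+1 := by ring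
      have hr : 3*(k+1)+1 = 3*k+1+1+1+1 := by ring
      rw [hn1, hn2, hr, Finset.sum_range_succ, Finset.sum_range_succ, Finset.sum_range_succ,
        ih (l+1)]
      rw [show (3*k+3*(l+1)+2 - (3*k+1) : ℕ) = 3*l+4 from by omega,
        show (3*k+3*(l+1)+1 - (3*k+1) : ℕ) = 3*l+3 from by omega,
        show (3*k+3*(l+1)+2 - (3*k+1+1) : ℕ) = 3*l+3 from by omega,
        show (3*k+3*(l+1)+1 - (3*k+1+1) : ℕ) = 3*l+2 from by omega,
        show (3*k+3*(l+1)+2 - (3*k+1+1+1) : ℕ) = 3*l+2 from by omega,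
        show (3*k+3*(l+1)+1 - (3*k+1+1+1) : ℕ) = 3*l+1 from by omega,
        show (3:ℕ)*k+1+1 = 3*k+2 from by ring, show (3:ℕ)*k+2+1 = 3*(k+1) from by ring]
      rw [show (2:ℕ)*(k+1)+2*l+1 = 2*k+2*(l+1)+1 from by ring]
      have hS : S2 (2*(k+1)) (2*k+2*(l+1)+1) = S2 (2*k) (2*k+2*(l+1)+1)
          + ((-1:ℂ))^(2*k+1) • (Rstar (2*k+1) * Rcoef ((2*k+2*(l+1)+1) - (2*k+1)))
          + ((-1:ℂ))^(2*k+1+1) • (Rstar (2*k+1+1) * Rcoef ((2*k+2*(l+1)+1) - (2*k+1+1))) := by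
        rw [show (2:ℕ)*(k+1) = 2*k+1+1 from by ring, S2_succ, S2_succ]
      rw [hS, show ((2*k+2*(l+1)+1) - (2*k+1) : ℕ) = 2*l+2 from by omega,
        show ((2*k+2*(l+1)+1) - (2*k+1+1) : ℕ) = 2*l+1 from by omega,
        show (2:ℕ)*k+1+1 = 2*(k+1) from by ring,
        npow_odd k, npow_even (k+1), neg_one_smul, one_smul,
        ← BE3a k l, ← BE3b (k+1) l]
      abel
  have E4 : ∀ k l : ℕ,
      (∑ j ∈ Finset.range (3*k+2+1),
        (G j * U (3*k+3*l+5 - j) + G j * U (3*k+3*l+4 - j))) = S2 (2*k+1) (2*k+2*l+3) := by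
    intro k
    induction k with
    | zero =>
      intro l
      rw [show (3:ℕ)*0+2+1 = 0+1+1+1 from by norm_num, Finset.sum_range_succ,
        Finset.sum_range_succ, Finset.sum_range_one]
      rw [show (3*0+3*l+5 - (0+1+1) : ℕ) = 3*l+3 from by omega,
        show (3*0+3*l+4 - (0+1+1) : ℕ) = 3*l+2 from by omega,
        show (3*0+3*l+5 - (0+1) : ℕ) = 3*l+4 from by omega,
        show (3*0+3*l+4 - (0+1) : ℕ) = 3*l+3 from by omega,
        show (3*0+3*l+5 - 0 : ℕ) = 3*(l+1)+2 from by omega,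
        show (3*0+3*l+4 - 0 : ℕ) = 3*(l+1)+1 from by omega]
      have hb1 := BE3a 0 l
      rw [show (3:ℕ)*0+1 = 0+1 from by norm_num, show (3:ℕ)*0+2 = 0+1+1 from by norm_num,
        show (2:ℕ)*0+1 = 0+1 from by norm_num] at hb1
      have hb0 := BE3b 0 (l+1)
      simp only [Nat.mul_zero] at hb0
      have hS : S2 (2*0+1) (2*0+2*l+3) = S2 0 (2*0+2*l+3)
          + ((-1:ℂ))^(0+1) • (Rstar (0+1) * Rcoef ((2*0+2*l+3) - (0+1))) := by
        rw [show (2:ℕ)*0+1 = 0+1 from by norm_num, S2_succ]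
      rw [hS, S2_zero, show ((2*0+2*l+3) - (0+1) : ℕ) = 2*l+2 from by omega,
        show (2:ℕ)*0+2*l+3 = 2*(l+1)+1 from by ring,
        show ((-1:ℂ))^(0+1) = -1 from by norm_num, neg_one_smul, ← hb1, ← hb0]
      abel
    | succ k ih =>
      intro l
      have hn1 : 3*(k+1)+3*l+5 = 3*k+3*(l+1)+5 := by ring
      have hn2 : 3*(k+1)+3*l+4 = 3*k+3*(l+1)+4 := by ring
      have hr : 3*(k+1)+2+1 = 3*k+2+1+1+1+1 := by ring
      rw [hn1, hn2, hr, Finset.sum_range_succ, Finset.sum_range_succ, Finset.sum_range_succ,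
        ih (l+1)]
      rw [show (3*k+3*(l+1)+5 - (3*k+2+1) : ℕ) = 3*(l+1)+2 from by omega,
        show (3*k+3*(l+1)+4 - (3*k+2+1) : ℕ) = 3*(l+1)+1 from by omega,
        show (3*k+3*(l+1)+5 - (3*k+2+1+1) : ℕ) = 3*l+4 from by omega,
        show (3*k+3*(l+1)+4 - (3*k+2+1+1) : ℕ) = 3*l+3 from by omega,
        show (3*k+3*(l+1)+5 - (3*k+2+1+1+1) : ℕ) = 3*l+3 from by omega,
        show (3*k+3*(l+1)+4 - (3*k+2+1+1+1) : ℕ) = 3*l+2 from by omega,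
        show (3:ℕ)*k+2+1 = 3*(k+1) from by ring]
      rw [show (2:ℕ)*(k+1)+2*l+3 = 2*k+2*(l+1)+3 from by ring]
      have hS : S2 (2*(k+1)+1) (2*k+2*(l+1)+3) = S2 (2*k+1) (2*k+2*(l+1)+3)
          + ((-1:ℂ))^(2*k+1+1) • (Rstar (2*k+1+1) * Rcoef ((2*k+2*(l+1)+3) - (2*k+1+1)))
          + ((-1:ℂ))^(2*k+1+1+1) • (Rstar (2*k+1+1+1) * Rcoef ((2*k+2*(l+1)+3) - (2*k+1+1+1))) := by
        rw [show (2:ℕ)*(k+1)+1 = 2*k+1+1+1 from by ring, S2_succ, S2_succ]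
      rw [hS, show ((2*k+2*(l+1)+3) - (2*k+1+1) : ℕ) = 2*(l+1)+1 from by omega,
        show ((2*k+2*(l+1)+3) - (2*k+1+1+1) : ℕ) = 2*l+2 from by omega,
        show (2:ℕ)*k+1+1+1 = 2*(k+1)+1 from by ring,
        show (2:ℕ)*k+1+1 = 2*(k+1) from by ring,
        npow_even (k+1), npow_odd (k+1), one_smul, neg_one_smul,
        ← BE3b (k+1) (l+1), ← BE3a (k+1) l]
      abel
  -- final assembly
  intro k l
  refine ⟨?_, ?_, ?_, ?_⟩
  · rw [hV, hZ, show (3:ℕ)*k + (3*l+2) + 1 = 3*k+3*l+3 from by ring, E1 k l,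
      show (2:ℕ)*k + (2*l+1) + 1 = 2*k+2*l+2 from by ring, npow_odd l, neg_one_smul]
  · rw [hV, hZ, neg_neg, show (3:ℕ)*l+2 + 3*k + 1 = 3*l+3*k+3 from by ring, E2 l k,
      show (2:ℕ)*l+1 + 2*k + 1 = 2*k+2*l+2 from by ring, npow_even k, one_smul]
  · rw [hV, hZ, hZ, neg_neg, sub_neg_eq_add,
      show (3:ℕ)*k + (3*l+1) + 1 = 3*k+3*l+2 from by ring,
      show (3:ℕ)*k + 3*l + 1 = 3*k+3*l+1 from by ring,
      ← Finset.sum_add_distrib, E3 k l, npow_even l, one_smul]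
  · rw [hV, hZ, hZ, ← neg_add,
      show (3:ℕ)*k+2 + (3*l+2) + 1 = 3*k+3*l+5 from by ring,
      show (3:ℕ)*k+2 + (3*l+1) + 1 = 3*k+3*l+4 from by ring,
      ← Finset.sum_add_distrib, E4 k l,
      show (2:ℕ)*k+1 + (2*l+1) + 1 = 2*k+2*l+3 from by ring, npow_odd l, neg_one_smul]
end

section
/- Fix c ∈ ℝ and define u : ℝ × ℝ → ℝ by u(x, t) = −3·c·x·(c·(x³ + 2t) − 6)/(c·(x³ − t) + 3)², which equals ∂ₓ² log τ where τ(x, t) = 1 + c·x³/3 − c·t/3. Then at every point (x, t) with c·(x³ − t) + 3 ≠ 0, u satisfies the KdV equation ∂_t u = u·∂ₓu + (1/12)·∂ₓ³u. -/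
private lemma hasDerivAt_D (c t y : ℝ) :
    HasDerivAt (fun z : ℝ => c * (z ^ 3 - t) + 3) (3 * c * y ^ 2) y := by
  have := (((hasDerivAt_pow 3 y).sub_const t).const_mul c).add_const 3
  convert this using 1; rfl; rfl
  push_cast
  ring

private lemma hasDerivAt_u0 (c t y : ℝ) (hy : c * (y ^ 3 - t) + 3 ≠ 0) :
    HasDerivAt (fun z : ℝ => -3 * c * z * (c * (z ^ 3 + 2 * t) - 6) / (c * (z ^ 3 - t) + 3) ^ 2)
      ((6*c^3*y^6 + 42*c^3*t*y^3 - 126*c^2*y^3 + 6*c^3*t^2 - 36*c^2*t + 54*c)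
        / (c * (y ^ 3 - t) + 3) ^ 3) y := by
  have hnum : HasDerivAt (fun z : ℝ => -3 * c * z * (c * (z ^ 3 + 2 * t) - 6))
      (-12*c^2*y^3 - 6*c^2*t + 18*c) y := by
    have h1 : HasDerivAt (fun z : ℝ => -3 * c * z) (-3 * c) y := by
      simpa using (hasDerivAt_id y).const_mul (-3 * c)
    have h2 : HasDerivAt (fun z : ℝ => c * (z ^ 3 + 2 * t) - 6) (3 * c * y ^ 2) y := by
      have := (((hasDerivAt_pow 3 y).add_const (2 * t)).const_mul c).sub_const 6
      convert this using 1; rfl; rfl; push_cast; ring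
    have := h1.mul h2
    convert this using 1; rfl; rfl; rfl; ring
  have hden : HasDerivAt (fun z : ℝ => (c * (z ^ 3 - t) + 3) ^ 2)
      (2 * (c * (y ^ 3 - t) + 3) ^ 1 * (3 * c * y ^ 2)) y := (hasDerivAt_D c t y).pow 2
  have := hnum.div hden (pow_ne_zero 2 hy)
  convert this using 1; rfl; rfl; rfl
  field_simp
  ring

private lemma hasDerivAt_u1 (c t y : ℝ) (hy : c * (y ^ 3 - t) + 3 ≠ 0) :
    HasDerivAt (fun z : ℝ =>
        (6*c^3*z^6 + 42*c^3*t*z^3 - 126*c^2*z^3 + 6*c^3*t^2 - 36*c^2*t + 54*c)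
          / (c * (z ^ 3 - t) + 3) ^ 3)
      ((-18*c^4*y^8 - 288*c^4*t*y^5 + 864*c^3*y^5 - 180*c^4*t^2*y^2 + 1080*c^3*t*y^2
          - 1620*c^2*y^2) / (c * (y ^ 3 - t) + 3) ^ 4) y := by
  have hnum : HasDerivAt (fun z : ℝ =>
      6*c^3*z^6 + 42*c^3*t*z^3 - 126*c^2*z^3 + 6*c^3*t^2 - 36*c^2*t + 54*c)
      (36*c^3*y^5 + 126*c^3*t*y^2 - 378*c^2*y^2) y := by
    have h6 := (hasDerivAt_pow 6 y).const_mul (6*c^3)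
    have h3 := (hasDerivAt_pow 3 y).const_mul (42*c^3*t - 126*c^2)
    have := (h6.add h3).add_const (6*c^3*t^2 - 36*c^2*t + 54*c)
    convert this using 1; rfl; rfl
    · funext z; push_cast [Pi.add_apply]; ring
    · push_cast; ring
  have hden : HasDerivAt (fun z : ℝ => (c * (z ^ 3 - t) + 3) ^ 3)
      (3 * (c * (y ^ 3 - t) + 3) ^ 2 * (3 * c * y ^ 2)) y := (hasDerivAt_D c t y).pow 3
  have := hnum.div hden (pow_ne_zero 3 hy)
  convert this using 1; rfl; rfl; rfl
  field_simp
  ring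

private lemma hasDerivAt_u2 (c t y : ℝ) (hy : c * (y ^ 3 - t) + 3 ≠ 0) :
    HasDerivAt (fun z : ℝ =>
        (-18*c^4*z^8 - 288*c^4*t*z^5 + 864*c^3*z^5 - 180*c^4*t^2*z^2 + 1080*c^3*t*z^2
          - 1620*c^2*z^2) / (c * (z ^ 3 - t) + 3) ^ 4)
      ((72*c^5*y^10 + 2160*c^5*t*y^7 - 6480*c^4*y^7 + 3240*c^5*t^2*y^4 - 19440*c^4*t*y^4
          + 29160*c^3*y^4 + 360*c^5*t^3*y - 3240*c^4*t^2*y + 9720*c^3*t*y - 9720*c^2*y)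
        / (c * (y ^ 3 - t) + 3) ^ 5) y := by
  have hnum : HasDerivAt (fun z : ℝ =>
      -18*c^4*z^8 - 288*c^4*t*z^5 + 864*c^3*z^5 - 180*c^4*t^2*z^2 + 1080*c^3*t*z^2
        - 1620*c^2*z^2)
      (-144*c^4*y^7 - 1440*c^4*t*y^4 + 4320*c^3*y^4 - 360*c^4*t^2*y + 2160*c^3*t*y
        - 3240*c^2*y) y := by
    have h8 := (hasDerivAt_pow 8 y).const_mul (-18*c^4)
    have h5 := (hasDerivAt_pow 5 y).const_mul (-288*c^4*t + 864*c^3)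
    have h2 := (hasDerivAt_pow 2 y).const_mul (-180*c^4*t^2 + 1080*c^3*t - 1620*c^2)
    have := (h8.add h5).add h2
    convert this using 1; rfl; rfl
    · funext z; push_cast [Pi.add_apply]; ring
    · push_cast; ring
  have hden : HasDerivAt (fun z : ℝ => (c * (z ^ 3 - t) + 3) ^ 4)
      (4 * (c * (y ^ 3 - t) + 3) ^ 3 * (3 * c * y ^ 2)) y := (hasDerivAt_D c t y).pow 4
  have := hnum.div hden (pow_ne_zero 4 hy)
  convert this using 1; rfl; rfl; rfl
  field_simp
  ring

private lemma hasDerivAt_ut (c x t : ℝ) (ht : c * (x ^ 3 - t) + 3 ≠ 0) :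
    HasDerivAt (fun s : ℝ => -3 * c * x * (c * (x ^ 3 + 2 * s) - 6) / (c * (x ^ 3 - s) + 3) ^ 2)
      ((-6*c^3*t*x - 12*c^3*x^4 + 18*c^2*x) / (c * (x ^ 3 - t) + 3) ^ 3) t := by
  have hnum : HasDerivAt (fun s : ℝ => -3 * c * x * (c * (x ^ 3 + 2 * s) - 6))
      (-6*c^2*x) t := by
    have h1 : HasDerivAt (fun s : ℝ => c * (x ^ 3 + 2 * s) - 6) (2 * c) t := by
      have := (((hasDerivAt_id t).const_mul 2).add_const (x^3 : ℝ)).const_mul c |>.sub_const 6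
      convert this using 1; rfl; rfl
      · funext s; simp only [id_eq]; ring
      · ring
    have := h1.const_mul (-3 * c * x)
    convert this using 1; rfl; rfl; ring
  have hD : HasDerivAt (fun s : ℝ => c * (x ^ 3 - s) + 3) (-c) t := by
    have := (((hasDerivAt_id t).neg.add_const (x^3 : ℝ)).const_mul c).add_const 3
    convert this using 1; rfl; rfl
    · funext s; simp only [Pi.neg_apply, id_eq]; ring
    · ring
  have hden : HasDerivAt (fun s : ℝ => (c * (x ^ 3 - s) + 3) ^ 2)
      (2 * (c * (x ^ 3 - t) + 3) ^ 1 * (-c)) t := hD.pow 2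
  have := hnum.div hden (pow_ne_zero 2 ht)
  convert this using 1; rfl; rfl; rfl
  field_simp
  ring

/-- The function `u(x,t) = -3cx(c(x³+2t)-6)/(c(x³-t)+3)² = ∂ₓ² log(1 + cx³/3 - ct/3)`
satisfies the KdV equation `u_t = u·u_x + (1/12)·u_xxx` at every point where
`c(x³-t)+3 ≠ 0`. -/
theorem simple_tau_solves_KdV (c : ℝ) (u : ℝ → ℝ → ℝ)
    (hu : ∀ x t : ℝ,
      u x t = -3 * c * x * (c * (x ^ 3 + 2 * t) - 6) / (c * (x ^ 3 - t) + 3) ^ 2) :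
    ∀ x t : ℝ, c * (x ^ 3 - t) + 3 ≠ 0 →
      deriv (fun s => u x s) t =
        u x t * deriv (fun y => u y t) x +
          (1 / 12) * iteratedDeriv 3 (fun y => u y t) x := by
  intro x t hx
  set g0 : ℝ → ℝ := fun z =>
    -3 * c * z * (c * (z ^ 3 + 2 * t) - 6) / (c * (z ^ 3 - t) + 3) ^ 2 with hg0
  set g1 : ℝ → ℝ := fun z =>
    (6*c^3*z^6 + 42*c^3*t*z^3 - 126*c^2*z^3 + 6*c^3*t^2 - 36*c^2*t + 54*c)
      / (c * (z ^ 3 - t) + 3) ^ 3 with hg1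
  set g2 : ℝ → ℝ := fun z =>
    (-18*c^4*z^8 - 288*c^4*t*z^5 + 864*c^3*z^5 - 180*c^4*t^2*z^2 + 1080*c^3*t*z^2
      - 1620*c^2*z^2) / (c * (z ^ 3 - t) + 3) ^ 4 with hg2
  set g3 : ℝ → ℝ := fun z =>
    (72*c^5*z^10 + 2160*c^5*t*z^7 - 6480*c^4*z^7 + 3240*c^5*t^2*z^4 - 19440*c^4*t*z^4
      + 29160*c^3*z^4 + 360*c^5*t^3*z - 3240*c^4*t^2*z + 9720*c^3*t*z - 9720*c^2*z)
      / (c * (z ^ 3 - t) + 3) ^ 5 with hg3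
  have hfx : (fun y => u y t) = g0 := funext fun y => hu y t
  have hft : (fun s => u x s) =
      fun s => -3 * c * x * (c * (x ^ 3 + 2 * s) - 6) / (c * (x ^ 3 - s) + 3) ^ 2 :=
    funext fun s => hu x s
  -- the open set where the denominator is nonzero
  set S : Set ℝ := {y | c * (y ^ 3 - t) + 3 ≠ 0} with hS
  have hSopen : IsOpen S := by
    have hcont : Continuous fun y : ℝ => c * (y ^ 3 - t) + 3 := by continuity
    exact isOpen_compl_singleton.preimage hcont
  have hxS : x ∈ S := hx
  -- deriv g0 = g1 on S
  have e1 : ∀ y ∈ S, deriv g0 y = g1 y := fun y hy => (hasDerivAt_u0 c t y hy).deriv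
  -- deriv (deriv g0) = g2 on S
  have e2 : ∀ y ∈ S, deriv (deriv g0) y = g2 y := by
    intro y hy
    have heq : deriv g0 =ᶠ[nhds y] g1 :=
      Filter.eventuallyEq_of_mem (hSopen.mem_nhds hy) e1
    rw [heq.deriv_eq]
    exact (hasDerivAt_u1 c t y hy).deriv
  -- deriv (deriv (deriv g0)) = g3 on S
  have e3 : ∀ y ∈ S, deriv (deriv (deriv g0)) y = g3 y := by
    intro y hy
    have heq : deriv (deriv g0) =ᶠ[nhds y] g2 :=
      Filter.eventuallyEq_of_mem (hSopen.mem_nhds hy) e2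
    rw [heq.deriv_eq]
    exact (hasDerivAt_u2 c t y hy).deriv
  have hit : iteratedDeriv 3 g0 x = g3 x := by
    rw [show (3 : ℕ) = 2 + 1 from rfl, iteratedDeriv_succ,
      show (2 : ℕ) = 1 + 1 from rfl, iteratedDeriv_succ, iteratedDeriv_one]
    exact e3 x hxS
  have hdt : deriv (fun s => u x s) t
      = (-6*c^3*t*x - 12*c^3*x^4 + 18*c^2*x) / (c * (x ^ 3 - t) + 3) ^ 3 := by
    rw [hft]
    exact (hasDerivAt_ut c x t hx).deriv
  rw [hdt, hfx, hu x t, e1 x hxS, hit, hg1, hg3]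
  field_simp
  ring
end
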